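/- arXiv:1909.12202 — 4 statements merged into one kernel-verified Lean document; each statement's English description precedes it below -/
import Mathlib

section
/- Let q be a real number with 1 ≤ q < ∞, let λ̲ < λ̄ be real numbers, and let S = {s ∈ ℂ : -λ̄ < Re(s) < -λ̲} be the open vertical strip. For an analytic function f : S → ℂ define N_q(f) = sup over λ ∈ (λ̲, λ̄) of ((1/2π) ∫_ℝ |f(-λ + iω)|^q dω)^{1/q}. If (f_n) is a sequence of analytic functions on S with N_q(f_n) < ∞ for all n which is Cauchy with respect to N_q (i.e., for every ε > 0 there is N such that N_q(f_m - f_n) < ε for all m, n ≥ N), then there exists an analytic function f : S → ℂ with N_q(f) < ∞ such that N_q(f_n - f) → 0 as n → ∞. -/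
open MeasureTheory Filter Metric Set intervalIntegral

/-- The open vertical strip `{s : ℂ | -λ̄ < Re s < -λ̲}`. -/
def strip (llo lhi : ℝ) : Set ℂ := {s : ℂ | -lhi < s.re ∧ s.re < -llo}

/-- The `H_q` norm on the strip: `sup_{λ ∈ (λ̲,λ̄)} ((1/2π)∫ |f(-λ+iω)|^q dω)^{1/q}`,
valued in `ℝ≥0∞`. -/
noncomputable def HqNorm (q llo lhi : ℝ) (f : ℂ → ℂ) : ENNReal :=
  ⨆ l ∈ Set.Ioo llo lhi,
    (ENNReal.ofReal (1 / (2 * Real.pi)) *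
      ∫⁻ ω : ℝ, (‖f (-l + ω * Complex.I)‖₊ : ENNReal) ^ q) ^ (1 / q)

lemma ofReal_norm_eq_coe_nnnorm {E : Type*} [SeminormedAddCommGroup E] (a : E) :
    ENNReal.ofReal ‖a‖ = (‖a‖₊ : ENNReal) :=
  ENNReal.ofReal_eq_coe_nnreal (norm_nonneg _)

lemma isOpen_strip (llo lhi : ℝ) : IsOpen (strip llo lhi) := by
  have : strip llo lhi = Complex.re ⁻¹' (Set.Ioo (-lhi) (-llo)) := rfl
  rw [this]; exact isOpen_Ioo.preimage Complex.continuous_re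

lemma mem_strip_line {llo lhi l : ℝ} (hl : l ∈ Set.Ioo llo lhi) (ω : ℝ) :
    (-l + ω * Complex.I : ℂ) ∈ strip llo lhi := by
  refine ⟨?_, ?_⟩ <;> simp
  · exact hl.2
  · exact hl.1

lemma line_continuous {llo lhi l : ℝ} {h : ℂ → ℂ} (hc : ContinuousOn h (strip llo lhi))
    (hl : l ∈ Set.Ioo llo lhi) :
    Continuous (fun ω : ℝ => h (-l + ω * Complex.I)) := by
  rw [← continuousOn_univ]
  exact hc.comp (by fun_prop) (fun ω _ => mem_strip_line hl ω)

lemma line_measurable {llo lhi l : ℝ} {h : ℂ → ℂ} (hc : ContinuousOn h (strip llo lhi))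
    (hl : l ∈ Set.Ioo llo lhi) (q : ℝ) :
    Measurable (fun ω : ℝ => (‖h (-l + ω * Complex.I)‖₊ : ENNReal) ^ q) :=
  ((line_continuous hc hl).nnnorm.measurable.coe_nnreal_ennreal).pow_const q

-- step (a): mean value inequality for the norm
lemma mv_norm {h : ℂ → ℂ} {c : ℂ} {r : ℝ} (hr : 0 < r)
    (hd : DiffContOnCl ℂ h (ball c r)) :
    2 * Real.pi * ‖h c‖ ≤ ∫ θ in (0:ℝ)..(2*Real.pi), ‖h (circleMap c r θ)‖ := by
  have key := hd.circleIntegral_sub_inv_smul (mem_ball_self hr)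
  have h1 : (∮ z in C(c, r), (z - c)⁻¹ • h z)
      = ∫ θ in (0:ℝ)..(2*Real.pi), Complex.I • h (circleMap c r θ) := by
    simp only [circleIntegral]
    refine intervalIntegral.integral_congr fun θ _ => ?_
    rw [deriv_circleMap, circleMap_sub_center, smul_smul]
    congr 1
    field_simp [circleMap_ne_center hr.ne']
  rw [h1] at key
  have h2 : ‖(2 * Real.pi * Complex.I : ℂ) • h c‖ = 2 * Real.pi * ‖h c‖ := by
    simp [norm_smul, Real.pi_pos.le]
  calc 2 * Real.pi * ‖h c‖ = ‖∫ θ in (0:ℝ)..(2*Real.pi), Complex.I • h (circleMap c r θ)‖ := by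
        rw [key, h2]
    _ ≤ ∫ θ in (0:ℝ)..(2*Real.pi), ‖Complex.I • h (circleMap c r θ)‖ :=
        intervalIntegral.norm_integral_le_integral_norm Real.two_pi_pos.le
    _ = ∫ θ in (0:ℝ)..(2*Real.pi), ‖h (circleMap c r θ)‖ := by
        simp [norm_smul]

-- step (b): shift interval and Jensen
lemma mv_rpow {q : ℝ} (hq : 1 ≤ q) {h : ℂ → ℂ} {c : ℂ} {r : ℝ} (hr : 0 < r)
    (hd : DiffContOnCl ℂ h (ball c r)) :
    2 * Real.pi * ‖h c‖ ^ q ≤ ∫ θ in Set.Ioo (-Real.pi) Real.pi, ‖h (circleMap c r θ)‖ ^ q := by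
  have hq0 : (0:ℝ) < q := lt_of_lt_of_le one_pos hq
  set u : ℝ → ℝ := fun θ => ‖h (circleMap c r θ)‖ with hu_def
  have hucont : Continuous u := by
    have h1 : Continuous (fun θ : ℝ => h (circleMap c r θ)) :=
      hd.continuousOn.comp_continuous (continuous_circleMap c r) (fun θ => by
        rw [closure_ball c hr.ne']
        exact sphere_subset_closedBall (circleMap_mem_sphere c hr.le θ))
    exact h1.norm
  -- periodic shift
  have hper : Function.Periodic u (2 * Real.pi) :=
    (periodic_circleMap c r).comp (fun z => ‖h z‖)
  have hshift : (∫ θ in (0:ℝ)..(2*Real.pi), u θ) = ∫ θ in Set.Ioo (-Real.pi) Real.pi, u θ := by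
    have := hper.intervalIntegral_add_eq 0 (-Real.pi)
    rw [zero_add] at this
    rw [this]
    have h2 : -Real.pi + 2 * Real.pi = Real.pi := by ring
    rw [h2, intervalIntegral.integral_of_le (by linarith [Real.pi_pos]),
      MeasureTheory.integral_Ioc_eq_integral_Ioo]
  have hmean : 2 * Real.pi * ‖h c‖ ≤ ∫ θ in Set.Ioo (-Real.pi) Real.pi, u θ := by
    rw [← hshift]; exact mv_norm hr hd
  -- the probability measure
  set μ : Measure ℝ := (ENNReal.ofReal (2*Real.pi))⁻¹ • volume.restrict (Set.Ioo (-Real.pi) Real.pi)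
    with hμ_def
  have h2π : (0:ℝ) < 2 * Real.pi := Real.two_pi_pos
  haveI : IsProbabilityMeasure μ := by
    constructor
    rw [hμ_def, Measure.smul_apply, Measure.restrict_apply MeasurableSet.univ,
      Set.univ_inter, Real.volume_Ioo, smul_eq_mul]
    rw [show Real.pi - -Real.pi = 2 * Real.pi by ring]
    exact ENNReal.inv_mul_cancel (by simp [h2π, Real.pi_pos]) ENNReal.ofReal_ne_top
  have huint : Integrable u μ := by
    refine Integrable.smul_measure ?_ (by simp [Real.pi_pos])
    exact (hucont.integrableOn_Icc.mono_set Set.Ioo_subset_Icc_self)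
  have huqint : Integrable (fun θ => u θ ^ q) μ := by
    refine Integrable.smul_measure ?_ (by simp [Real.pi_pos])
    exact ((hucont.rpow_const (fun x => Or.inr hq0.le)).integrableOn_Icc.mono_set
      Set.Ioo_subset_Icc_self)
  -- ‖h c‖ ≤ ∫ u ∂μ
  have hint_eq : ∫ θ, u θ ∂μ = (2*Real.pi)⁻¹ * ∫ θ in Set.Ioo (-Real.pi) Real.pi, u θ := by
    rw [hμ_def, MeasureTheory.integral_smul_measure, ENNReal.toReal_inv, ENNReal.toReal_ofReal h2π.le,
      smul_eq_mul]
  have hmean' : ‖h c‖ ≤ ∫ θ, u θ ∂μ := by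
    rw [hint_eq]
    rw [mul_comm] at hmean
    calc ‖h c‖ = (2*Real.pi)⁻¹ * (‖h c‖ * (2*Real.pi)) := by field_simp
    _ ≤ (2*Real.pi)⁻¹ * ∫ θ in Set.Ioo (-Real.pi) Real.pi, u θ := by
        exact mul_le_mul_of_nonneg_left hmean (by positivity)
  -- Jensen via eLpNorm monotonicity
  have hnn : (‖h c‖₊ : ENNReal) ≤ ∫⁻ θ, (‖u θ‖₊ : ENNReal) ∂μ := by
    calc (‖h c‖₊ : ENNReal) = ENNReal.ofReal ‖h c‖ := (ofReal_norm_eq_coe_nnnorm _).symm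
    _ ≤ ENNReal.ofReal (∫ θ, u θ ∂μ) := ENNReal.ofReal_le_ofReal hmean'
    _ = ∫⁻ θ, ENNReal.ofReal (u θ) ∂μ :=
        MeasureTheory.ofReal_integral_eq_lintegral_ofReal huint
          (Filter.Eventually.of_forall fun θ => norm_nonneg _)
    _ = ∫⁻ θ, (‖u θ‖₊ : ENNReal) ∂μ := by
        refine lintegral_congr fun θ => ?_
        rw [← ofReal_norm_eq_coe_nnnorm, Real.norm_of_nonneg (norm_nonneg _)]
  have hjen : (‖h c‖₊ : ENNReal) ≤ (∫⁻ θ, (‖u θ‖₊ : ENNReal) ^ q ∂μ) ^ (1/q) := by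
    have hmono := MeasureTheory.eLpNorm_le_eLpNorm_of_exponent_le (μ := μ) (f := u)
      (p := 1) (q := ENNReal.ofReal q) (by
        rw [← ENNReal.ofReal_one]; exact ENNReal.ofReal_le_ofReal hq)
      hucont.aestronglyMeasurable
    rw [MeasureTheory.eLpNorm_one_eq_lintegral_enorm] at hmono
    rw [MeasureTheory.eLpNorm_eq_lintegral_rpow_enorm_toReal
      (by simp [hq0]) (by simp), ENNReal.toReal_ofReal hq0.le] at hmono
    exact le_trans hnn hmono
  -- raise to power q
  have hq_ne : q ≠ 0 := hq0.ne'
  have hjq : (‖h c‖₊ : ENNReal) ^ q ≤ ∫⁻ θ, (‖u θ‖₊ : ENNReal) ^ q ∂μ := by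
    calc (‖h c‖₊ : ENNReal) ^ q ≤ ((∫⁻ θ, (‖u θ‖₊ : ENNReal) ^ q ∂μ) ^ (1/q)) ^ q :=
        ENNReal.rpow_le_rpow hjen hq0.le
    _ = ∫⁻ θ, (‖u θ‖₊ : ENNReal) ^ q ∂μ := by
        rw [← ENNReal.rpow_mul, one_div_mul_cancel hq_ne, ENNReal.rpow_one]
  -- unfold μ
  have hlin : ∫⁻ θ, (‖u θ‖₊ : ENNReal) ^ q ∂μ
      = (ENNReal.ofReal (2*Real.pi))⁻¹ * ∫⁻ θ in Set.Ioo (-Real.pi) Real.pi,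
          (‖u θ‖₊ : ENNReal) ^ q := by
    rw [hμ_def, lintegral_smul_measure, smul_eq_mul]
  have hfinal : ENNReal.ofReal (2*Real.pi) * (‖h c‖₊ : ENNReal) ^ q
      ≤ ∫⁻ θ in Set.Ioo (-Real.pi) Real.pi, (‖u θ‖₊ : ENNReal) ^ q := by
    rw [hlin] at hjq
    calc ENNReal.ofReal (2*Real.pi) * (‖h c‖₊ : ENNReal) ^ q
        ≤ ENNReal.ofReal (2*Real.pi) * ((ENNReal.ofReal (2*Real.pi))⁻¹
          * ∫⁻ θ in Set.Ioo (-Real.pi) Real.pi, (‖u θ‖₊ : ENNReal) ^ q) :=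
          mul_le_mul_right hjq _
    _ = _ := by
        rw [← mul_assoc, ENNReal.mul_inv_cancel (by simp [h2π, Real.pi_pos]) ENNReal.ofReal_ne_top, one_mul]
  -- convert to real integrals
  have hrhs : (∫⁻ θ in Set.Ioo (-Real.pi) Real.pi, (‖u θ‖₊ : ENNReal) ^ q)
      = ENNReal.ofReal (∫ θ in Set.Ioo (-Real.pi) Real.pi, u θ ^ q) := by
    rw [MeasureTheory.ofReal_integral_eq_lintegral_ofReal
      ((hucont.rpow_const (fun x => Or.inr hq0.le)).integrableOn_Icc.mono_set
        Set.Ioo_subset_Icc_self)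
      (Filter.Eventually.of_forall fun θ => Real.rpow_nonneg (norm_nonneg _) q)]
    refine lintegral_congr fun θ => ?_
    have h1 : (‖u θ‖₊ : ENNReal) = ENNReal.ofReal (u θ) := by
      rw [← ofReal_norm_eq_coe_nnnorm, Real.norm_of_nonneg (norm_nonneg _)]
    rw [h1]
    exact ENNReal.ofReal_rpow_of_nonneg (norm_nonneg _) hq0.le
  rw [hrhs] at hfinal
  have hlhs : ENNReal.ofReal (2*Real.pi) * (‖h c‖₊ : ENNReal) ^ q
      = ENNReal.ofReal (2 * Real.pi * ‖h c‖ ^ q) := by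
    rw [← ofReal_norm_eq_coe_nnnorm, ENNReal.ofReal_rpow_of_nonneg (norm_nonneg _) hq0.le,
      ← ENNReal.ofReal_mul h2π.le]
  rw [hlhs] at hfinal
  have : (0:ℝ) ≤ ∫ θ in Set.Ioo (-Real.pi) Real.pi, u θ ^ q :=
    MeasureTheory.setIntegral_nonneg measurableSet_Ioo
      (fun θ _ => Real.rpow_nonneg (norm_nonneg _) q)
  exact (ENNReal.ofReal_le_ofReal_iff this).mp hfinal

lemma ball_lower {q : ℝ} (hq : 1 ≤ q) {h : ℂ → ℂ} {c : ℂ} {δ : ℝ} (hδ : 0 < δ)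
    (hd : DifferentiableOn ℂ h (closedBall c δ)) :
    ENNReal.ofReal (Real.pi * δ^2 * ‖h c‖^q)
      ≤ ∫⁻ z in ball c δ, (‖h z‖₊ : ENNReal) ^ q := by
  have hq0 : (0:ℝ) < q := lt_of_lt_of_le one_pos hq
  set g : ℂ → ℝ := fun z => ‖h z‖ ^ q with hg_def
  set P : ℝ × ℝ → ℂ := fun p => circleMap c p.1 p.2 with hP_def
  have hgcont : ContinuousOn g (closedBall c δ) :=
    (hd.continuousOn.norm).rpow_const (fun x _ => Or.inr hq0.le)
  have hPcont : Continuous P := by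
    simp only [hP_def, circleMap]
    fun_prop
  have hPmaps : ∀ p : ℝ × ℝ, p.1 ∈ Set.Icc 0 δ → P p ∈ closedBall c δ := by
    intro p hp
    have := circleMap_mem_closedBall c hp.1 p.2
    exact closedBall_subset_closedBall hp.2 this
  -- the integrand on the product space
  set φ : ℝ × ℝ → ℝ := fun p => p.1 * g (P p) with hφ_def
  have hφcont : ContinuousOn φ ((Set.Icc 0 δ) ×ˢ (Set.Icc (-Real.pi) Real.pi)) := by
    refine (continuous_fst.continuousOn).mul ?_
    exact hgcont.comp hPcont.continuousOn (fun p hp => hPmaps p hp.1)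
  have hK : IsCompact ((Set.Icc (0:ℝ) δ) ×ˢ (Set.Icc (-Real.pi) Real.pi)) :=
    isCompact_Icc.prod isCompact_Icc
  have hφint : IntegrableOn φ ((Set.Ioo 0 δ) ×ˢ (Set.Ioo (-Real.pi) Real.pi)) := by
    refine (hφcont.integrableOn_compact hK).mono_set ?_
    exact Set.prod_mono Set.Ioo_subset_Icc_self Set.Ioo_subset_Icc_self
  set T : Set (ℝ × ℝ) := (Set.Ioo 0 δ) ×ˢ (Set.Ioo (-Real.pi) Real.pi) with hT_def
  have hprodmeas : (volume : Measure (ℝ×ℝ)).restrict T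
      = (volume.restrict (Set.Ioo 0 δ)).prod (volume.restrict (Set.Ioo (-Real.pi) Real.pi)) := by
    rw [Measure.volume_eq_prod, Measure.prod_restrict]
  have hφint' : Integrable φ
      ((volume.restrict (Set.Ioo 0 δ)).prod (volume.restrict (Set.Ioo (-Real.pi) Real.pi))) := by
    rw [← hprodmeas]; exact hφint
  have hiter : ∫ p in T, φ p
      = ∫ r in Set.Ioo 0 δ, ∫ θ in Set.Ioo (-Real.pi) Real.pi, φ (r, θ) := by
    have e1 : (∫ p in T, φ p) = ∫ p, φ p ∂((volume.restrict (Set.Ioo 0 δ)).prod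
        (volume.restrict (Set.Ioo (-Real.pi) Real.pi))) := by rw [← hprodmeas]
    rw [e1]
    exact MeasureTheory.integral_prod φ hφint'
  -- inner lower bound
  have hinner : ∀ r ∈ Set.Ioo (0:ℝ) δ,
      2 * Real.pi * ‖h c‖ ^ q * r ≤ ∫ θ in Set.Ioo (-Real.pi) Real.pi, φ (r, θ) := by
    intro r hr
    have hdr : DiffContOnCl ℂ h (ball c r) := by
      have : DifferentiableOn ℂ h (closure (ball c r)) := by
        rw [closure_ball c hr.1.ne']
        exact hd.mono (closedBall_subset_closedBall hr.2.le)
      exact this.diffContOnCl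
    have mv := mv_rpow hq hr.1 hdr
    have e2 : ∫ θ in Set.Ioo (-Real.pi) Real.pi, φ (r, θ)
        = r * ∫ θ in Set.Ioo (-Real.pi) Real.pi, ‖h (circleMap c r θ)‖ ^ q := by
      simp only [hφ_def, hP_def, hg_def]
      exact MeasureTheory.integral_const_mul r _
    rw [e2, mul_comm (2 * Real.pi * ‖h c‖ ^ q) r]
    exact mul_le_mul_of_nonneg_left mv hr.1.le
  -- iterated integral lower bound
  have hRHSint : IntegrableOn
      (fun r => ∫ θ in Set.Ioo (-Real.pi) Real.pi, φ (r, θ)) (Set.Ioo 0 δ) :=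
    hφint'.integral_prod_left
  have hLHSint : IntegrableOn (fun r : ℝ => 2 * Real.pi * ‖h c‖ ^ q * r) (Set.Ioo 0 δ) :=
    ((continuous_const.mul continuous_id).integrableOn_Icc).mono_set Set.Ioo_subset_Icc_self
  have hlow : (∫ r in Set.Ioo 0 δ, 2 * Real.pi * ‖h c‖ ^ q * r)
      ≤ ∫ r in Set.Ioo 0 δ, ∫ θ in Set.Ioo (-Real.pi) Real.pi, φ (r, θ) :=
    MeasureTheory.setIntegral_mono_on hLHSint hRHSint measurableSet_Ioo hinner
  have hlhs_val : (∫ r in Set.Ioo 0 δ, 2 * Real.pi * ‖h c‖ ^ q * r)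
      = Real.pi * δ^2 * ‖h c‖ ^ q := by
    rw [MeasureTheory.integral_const_mul]
    have : (∫ r in Set.Ioo 0 δ, r) = δ^2/2 := by
      rw [← MeasureTheory.integral_Ioc_eq_integral_Ioo,
        ← intervalIntegral.integral_of_le hδ.le, integral_id]
      ring
    rw [this]; ring
  -- polar change of variables
  have hpolar : ∫ p in T, φ p = ∫ z in ball c δ, g z := by
    set F : ℂ → ℝ := (ball (0:ℂ) δ).indicator (fun z => g (c + z)) with hF_def
    have key := Complex.integral_comp_polarCoord_symm F
    have hmem : ∀ z : ℂ, (c + z ∈ ball c δ) ↔ z ∈ ball (0:ℂ) δ := by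
      intro z; simp [mem_ball, dist_eq_norm]
    have hRHS : ∫ z, F z = ∫ z in ball c δ, g z := by
      have e3 : ∀ z : ℂ, F z = (ball c δ).indicator g (c + z) := by
        intro z
        by_cases hz : z ∈ ball (0:ℂ) δ
        · rw [hF_def, Set.indicator_of_mem hz, Set.indicator_of_mem ((hmem z).mpr hz)]
        · rw [hF_def, Set.indicator_of_notMem hz,
            Set.indicator_of_notMem (fun hc' => hz ((hmem z).mp hc'))]
      calc ∫ z, F z = ∫ z, (ball c δ).indicator g (c + z) := by
            exact MeasureTheory.integral_congr_ae (Filter.Eventually.of_forall e3)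
      _ = ∫ z, (ball c δ).indicator g z :=
            MeasureTheory.integral_add_left_eq_self ((ball c δ).indicator g) c
      _ = ∫ z in ball c δ, g z := MeasureTheory.integral_indicator measurableSet_ball
    have hcirc : ∀ p : ℝ × ℝ, c + Complex.polarCoord.symm p = P p := by
      intro p
      rw [Complex.polarCoord_symm_apply, hP_def]
      simp only [circleMap, Complex.exp_mul_I]
      push_cast
      ring
    have hLHS : (∫ p in polarCoord.target, p.1 • F (Complex.polarCoord.symm p))
        = ∫ p in T, φ p := by
      have htarget : polarCoord.target = Set.Ioi (0:ℝ) ×ˢ Set.Ioo (-Real.pi) Real.pi := rfl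
      have hTsub : T ⊆ Set.Ioi (0:ℝ) ×ˢ Set.Ioo (-Real.pi) Real.pi :=
        Set.prod_mono (fun x hx => hx.1) (fun x hx => hx)
      have hmeasT : MeasurableSet T := (measurableSet_Ioo.prod measurableSet_Ioo)
      have e4 : Set.EqOn (fun p : ℝ × ℝ => p.1 • F (Complex.polarCoord.symm p))
          (T.indicator φ) (Set.Ioi (0:ℝ) ×ˢ Set.Ioo (-Real.pi) Real.pi) := by
        intro p hp
        have hp1 : 0 < p.1 := hp.1
        by_cases hpδ : p.1 < δ
        · have hball : Complex.polarCoord.symm p ∈ ball (0:ℂ) δ := by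
            rw [mem_ball, Complex.dist_eq, sub_zero, Complex.norm_polarCoord_symm, abs_of_pos hp1]
            exact hpδ
          have hpT : p ∈ T := ⟨⟨hp1, hpδ⟩, hp.2⟩
          simp only [hF_def, Set.indicator_of_mem hball, Set.indicator_of_mem hpT,
            smul_eq_mul]
          rw [hφ_def]
          simp only
          rw [hcirc p]
        · have hball : Complex.polarCoord.symm p ∉ ball (0:ℂ) δ := by
            rw [mem_ball, Complex.dist_eq, sub_zero, Complex.norm_polarCoord_symm, abs_of_pos hp1]
            exact fun hcon => hpδ hcon
          have hpT : p ∉ T := fun hmemT => hpδ hmemT.1.2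
          simp only [hF_def, Set.indicator_of_notMem hball, Set.indicator_of_notMem hpT,
            smul_eq_mul, mul_zero]
      rw [htarget, MeasureTheory.setIntegral_congr_fun
        (measurableSet_Ioi.prod measurableSet_Ioo) e4,
        MeasureTheory.setIntegral_indicator hmeasT,
        Set.inter_eq_self_of_subset_right hTsub]
    rw [← hLHS, key, hRHS]
  -- assemble the real inequality
  have hreal : Real.pi * δ^2 * ‖h c‖ ^ q ≤ ∫ z in ball c δ, g z := by
    rw [← hpolar, hiter, ← hlhs_val]
    exact hlow
  -- pass to lintegral
  have hgint : IntegrableOn g (ball c δ) :=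
    (hgcont.integrableOn_compact (isCompact_closedBall c δ)).mono_set ball_subset_closedBall
  calc ENNReal.ofReal (Real.pi * δ^2 * ‖h c‖^q)
      ≤ ENNReal.ofReal (∫ z in ball c δ, g z) := ENNReal.ofReal_le_ofReal hreal
  _ = ∫⁻ z in ball c δ, ENNReal.ofReal (g z) :=
      MeasureTheory.ofReal_integral_eq_lintegral_ofReal hgint
        (Filter.Eventually.of_forall fun z => Real.rpow_nonneg (norm_nonneg _) q)
  _ = ∫⁻ z in ball c δ, (‖h z‖₊ : ENNReal) ^ q := by
      refine lintegral_congr fun z => ?_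
      rw [hg_def]
      rw [← ENNReal.ofReal_rpow_of_nonneg (norm_nonneg _) (le_of_lt hq0),
        ofReal_norm_eq_coe_nnnorm]

lemma line_le_pow {q llo lhi : ℝ} (hq : 1 ≤ q) (h : ℂ → ℂ) {l : ℝ} (hl : l ∈ Set.Ioo llo lhi) :
    ENNReal.ofReal (1/(2*Real.pi)) * ∫⁻ ω : ℝ, (‖h (-l + ω * Complex.I)‖₊ : ENNReal) ^ q
      ≤ HqNorm q llo lhi h ^ q := by
  have hq0 : (0:ℝ) < q := lt_of_lt_of_le one_pos hq
  set a := ENNReal.ofReal (1/(2*Real.pi)) * ∫⁻ ω : ℝ, (‖h (-l + ω * Complex.I)‖₊ : ENNReal) ^ q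
    with ha_def
  have h1 : a ^ (1/q) ≤ HqNorm q llo lhi h := by
    rw [HqNorm]
    exact le_iSup₂ (f := fun (l' : ℝ) (_ : l' ∈ Set.Ioo llo lhi) =>
      (ENNReal.ofReal (1 / (2 * Real.pi)) *
        ∫⁻ ω : ℝ, (‖h (-l' + ω * Complex.I)‖₊ : ENNReal) ^ q) ^ (1 / q)) l hl
  have e : a = (a ^ (1/q)) ^ q := by
    rw [← ENNReal.rpow_mul, one_div_mul_cancel hq0.ne', ENNReal.rpow_one]
  rw [ha_def] at e ⊢
  rw [e]
  exact ENNReal.rpow_le_rpow h1 hq0.le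

lemma strip_upper {q llo lhi : ℝ} (hq : 1 ≤ q) {h : ℂ → ℂ}
    (hcont : ContinuousOn h (strip llo lhi))
    {c : ℂ} {δ : ℝ} (hδ : 0 < δ) (hball : closedBall c δ ⊆ strip llo lhi) :
    ∫⁻ z in ball c δ, (‖h z‖₊ : ENNReal) ^ q
      ≤ ENNReal.ofReal ((2*δ) * (2*Real.pi)) * HqNorm q llo lhi h ^ q := by
  have hq0 : (0:ℝ) < q := lt_of_lt_of_le one_pos hq
  set Ix := Set.Ioo (c.re - δ) (c.re + δ) with hIx_def
  have hIx : ∀ x ∈ Ix, -x ∈ Set.Ioo llo lhi := by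
    intro x hx
    have habs : |x - c.re| < δ := abs_sub_lt_iff.mpr ⟨by linarith [hx.2], by linarith [hx.1]⟩
    have hzmem : (⟨x, c.im⟩ : ℂ) ∈ closedBall c δ := by
      rw [mem_closedBall, Complex.dist_eq_re_im]
      have e : ((⟨x, c.im⟩ : ℂ).re - c.re)^2 + ((⟨x, c.im⟩ : ℂ).im - c.im)^2
          = (x - c.re)^2 := by simp
      rw [e, Real.sqrt_sq_eq_abs]
      exact habs.le
    obtain ⟨h1, h2⟩ := hball hzmem
    simp only [Complex.ofReal_re] at h1 h2
    exact ⟨by simpa using lt_neg_of_lt_neg h2, by simpa using neg_lt_of_neg_lt h1⟩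
  have hsub : ball c δ ⊆ Complex.re ⁻¹' Ix := by
    intro z hz
    have h1 : |(z - c).re| ≤ ‖z - c‖ := Complex.abs_re_le_norm _
    rw [mem_ball, Complex.dist_eq] at hz
    have h2 : |z.re - c.re| < δ := by
      rw [← Complex.sub_re]; exact lt_of_le_of_lt h1 hz
    rw [abs_sub_lt_iff] at h2
    exact ⟨by linarith [h2.2], by linarith [h2.1]⟩
  have step1 : ∫⁻ z in ball c δ, (‖h z‖₊ : ENNReal) ^ q
      ≤ ∫⁻ z in Complex.re ⁻¹' Ix, (‖h z‖₊ : ENNReal) ^ q :=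
    lintegral_mono_set hsub
  -- transfer to ℝ × ℝ
  set e := Complex.measurableEquivRealProd with he_def
  set f : ℝ × ℝ → ENNReal := fun p => (‖h (p.1 + p.2 * Complex.I)‖₊ : ENNReal) ^ q with hf_def
  have hfe : ∀ z : ℂ, f (e z) = (‖h z‖₊ : ENNReal) ^ q := by
    intro z
    have h1 : e z = (z.re, z.im) := rfl
    rw [h1, hf_def]
    simp only
    rw [Complex.re_add_im]
  have hpre : e ⁻¹' (Ix ×ˢ (Set.univ : Set ℝ)) = Complex.re ⁻¹' Ix := by
    ext z
    simp only [Set.mem_preimage, Set.mem_prod, Set.mem_univ, and_true]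
    rfl
  have step2 : ∫⁻ z in Complex.re ⁻¹' Ix, (‖h z‖₊ : ENNReal) ^ q
      = ∫⁻ p in Ix ×ˢ (Set.univ : Set ℝ), f p := by
    rw [← Complex.volume_preserving_equiv_real_prod.setLIntegral_comp_preimage_emb
      e.measurableEmbedding f (Ix ×ˢ (Set.univ : Set ℝ)), hpre]
    exact (setLIntegral_congr_fun (hpre ▸ (measurableSet_Ioo.prod MeasurableSet.univ).preimage
      e.measurable) (fun z _ => (hfe z).symm))
  -- Tonelli
  have hmeas_prod : (volume.restrict Ix).prod (volume : Measure ℝ)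
      = ((volume : Measure (ℝ×ℝ)).restrict (Ix ×ˢ (Set.univ : Set ℝ))) := by
    have e1 : (volume.restrict Ix).prod (volume : Measure ℝ)
        = (volume.restrict Ix).prod ((volume : Measure ℝ).restrict Set.univ) := by
      rw [Measure.restrict_univ]
    rw [e1, Measure.prod_restrict, ← Measure.volume_eq_prod]
  have hfcont : ContinuousOn f (Ix ×ˢ (Set.univ : Set ℝ)) := by
    have hm : Continuous (fun p : ℝ × ℝ => (p.1 : ℂ) + p.2 * Complex.I) := by fun_prop
    have hmaps : ∀ p : ℝ × ℝ, p ∈ Ix ×ˢ (Set.univ : Set ℝ)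
        → ((p.1 : ℂ) + (p.2 : ℝ) * Complex.I) ∈ strip llo lhi := by
      intro p hp
      have hre : (((p.1 : ℝ) : ℂ) + (p.2 : ℝ) * Complex.I).re = p.1 := by simp
      have h3 := hIx p.1 hp.1
      exact ⟨by rw [hre]; linarith [h3.2], by rw [hre]; linarith [h3.1]⟩
    have hc1 : ContinuousOn (fun p : ℝ×ℝ => h ((p.1:ℂ) + p.2*Complex.I))
        (Ix ×ˢ (Set.univ : Set ℝ)) := hcont.comp hm.continuousOn hmaps
    exact ENNReal.continuous_rpow_const.comp_continuousOn
      (ENNReal.continuous_coe.comp_continuousOn hc1.nnnorm)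
  have haem : AEMeasurable f ((volume.restrict Ix).prod volume) := by
    rw [hmeas_prod]
    exact hfcont.aemeasurable (measurableSet_Ioo.prod MeasurableSet.univ)
  have step3 : ∫⁻ p in Ix ×ˢ (Set.univ : Set ℝ), f p = ∫⁻ x in Ix, ∫⁻ y, f (x, y) := by
    rw [show (∫⁻ p in Ix ×ˢ (Set.univ : Set ℝ), f p)
        = ∫⁻ p, f p ∂((volume.restrict Ix).prod volume) from by rw [hmeas_prod]]
    exact MeasureTheory.lintegral_prod f haem
  have hc2 : ENNReal.ofReal (2*Real.pi) * ENNReal.ofReal (1/(2*Real.pi)) = 1 := by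
    rw [← ENNReal.ofReal_mul Real.two_pi_pos.le, mul_one_div_cancel Real.two_pi_pos.ne',
      ENNReal.ofReal_one]
  have step4 : ∀ x ∈ Ix, ∫⁻ y, f (x, y) ≤ ENNReal.ofReal (2*Real.pi) * HqNorm q llo lhi h ^ q := by
    intro x hx
    have hline := line_le_pow (llo := llo) (lhi := lhi) hq h (hIx x hx)
    have e5 : (ENNReal.ofReal (1/(2*Real.pi)) *
        ∫⁻ ω : ℝ, (‖h (-((-x : ℝ) : ℂ) + ω * Complex.I)‖₊ : ENNReal) ^ q)
        = ENNReal.ofReal (1/(2*Real.pi)) * ∫⁻ y, f (x, y) := by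
      simp only [Complex.ofReal_neg, neg_neg]
      try rfl
    rw [e5] at hline
    calc ∫⁻ y, f (x, y) = 1 * ∫⁻ y, f (x, y) := (one_mul _).symm
    _ = ENNReal.ofReal (2*Real.pi) * (ENNReal.ofReal (1/(2*Real.pi)) * ∫⁻ y, f (x, y)) := by
        rw [← mul_assoc, hc2]
    _ ≤ ENNReal.ofReal (2*Real.pi) * (HqNorm q llo lhi h ^ q) := mul_le_mul_right hline _
  have step5 : ∫⁻ x in Ix, ∫⁻ y, f (x, y)
      ≤ ENNReal.ofReal ((2*δ)*(2*Real.pi)) * HqNorm q llo lhi h ^ q := by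
    calc ∫⁻ x in Ix, ∫⁻ y, f (x, y)
        ≤ ∫⁻ _x in Ix, ENNReal.ofReal (2*Real.pi) * HqNorm q llo lhi h ^ q :=
          setLIntegral_mono measurable_const step4
    _ = (ENNReal.ofReal (2*Real.pi) * HqNorm q llo lhi h ^ q) * volume Ix :=
          setLIntegral_const _ _
    _ = _ := by
        rw [hIx_def, Real.volume_Ioo, show c.re + δ - (c.re - δ) = 2*δ by ring,
          show (2*δ)*(2*Real.pi) = (2*Real.pi)*(2*δ) by ring,
          ENNReal.ofReal_mul Real.two_pi_pos.le]
        ring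
  exact le_trans step1 (by rw [step2, step3]; exact step5)

lemma pointwise_bound {q llo lhi : ℝ} (hq : 1 ≤ q) {h : ℂ → ℂ}
    (hd : DifferentiableOn ℂ h (strip llo lhi)) {c : ℂ} {δ : ℝ} (hδ : 0 < δ)
    (hball : closedBall c δ ⊆ strip llo lhi) :
    (‖h c‖₊ : ENNReal) ≤ ENNReal.ofReal ((4/δ) ^ (1/q)) * HqNorm q llo lhi h := by
  have hq0 : (0:ℝ) < q := lt_of_lt_of_le one_pos hq
  have hlow := ball_lower hq hδ (hd.mono hball)
  have hup := strip_upper hq hd.continuousOn hδ hball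
  have h1 : ENNReal.ofReal (Real.pi * δ^2) * (‖h c‖₊ : ENNReal) ^ q
      ≤ ENNReal.ofReal ((2*δ) * (2*Real.pi)) * HqNorm q llo lhi h ^ q := by
    have e0 : ENNReal.ofReal (Real.pi * δ^2 * ‖h c‖^q)
        = ENNReal.ofReal (Real.pi * δ^2) * (‖h c‖₊ : ENNReal) ^ q := by
      rw [ENNReal.ofReal_mul (by positivity), ← ofReal_norm_eq_coe_nnnorm,
        ENNReal.ofReal_rpow_of_nonneg (norm_nonneg _) hq0.le]
    rw [← e0]
    exact le_trans hlow (le_trans hup (le_refl _))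
  have hA0 : ENNReal.ofReal (Real.pi * δ^2) ≠ 0 := by
    simp only [ne_eq, ENNReal.ofReal_eq_zero, not_le]
    positivity
  have h2 : (‖h c‖₊ : ENNReal) ^ q ≤ ENNReal.ofReal (4/δ) * HqNorm q llo lhi h ^ q := by
    have h3 : (‖h c‖₊ : ENNReal) ^ q ≤ (ENNReal.ofReal (Real.pi * δ^2))⁻¹ *
        (ENNReal.ofReal ((2*δ) * (2*Real.pi)) * HqNorm q llo lhi h ^ q) := by
      rw [← one_mul ((‖h c‖₊ : ENNReal) ^ q),
        ← ENNReal.inv_mul_cancel hA0 ENNReal.ofReal_ne_top, mul_assoc]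
      exact mul_le_mul_right h1 _
    have h4 : (ENNReal.ofReal (Real.pi * δ^2))⁻¹ * ENNReal.ofReal ((2*δ) * (2*Real.pi))
        = ENNReal.ofReal (4/δ) := by
      rw [← ENNReal.ofReal_inv_of_pos (by positivity),
        ← ENNReal.ofReal_mul (by positivity)]
      congr 1
      field_simp
      ring
    rw [← mul_assoc, h4] at h3
    exact h3
  calc (‖h c‖₊ : ENNReal) = ((‖h c‖₊ : ENNReal) ^ q) ^ (1/q) := by
        rw [← ENNReal.rpow_mul, mul_one_div_cancel hq0.ne', ENNReal.rpow_one]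
  _ ≤ (ENNReal.ofReal (4/δ) * HqNorm q llo lhi h ^ q) ^ (1/q) :=
        ENNReal.rpow_le_rpow h2 (by positivity)
  _ = ENNReal.ofReal ((4/δ) ^ (1/q)) * HqNorm q llo lhi h := by
        rw [ENNReal.mul_rpow_of_nonneg _ _ (by positivity : (0:ℝ) ≤ 1/q),
          ← ENNReal.rpow_mul, mul_one_div_cancel hq0.ne', ENNReal.rpow_one,
          ENNReal.ofReal_rpow_of_pos (by positivity)]

lemma HqNorm_sub_comm (q llo lhi : ℝ) (F G : ℂ → ℂ) :
    HqNorm q llo lhi (fun s => F s - G s) = HqNorm q llo lhi (fun s => G s - F s) := by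
  have e : ∀ a b : ℂ, ‖a - b‖₊ = ‖b - a‖₊ := fun a b => by rw [← neg_sub, nnnorm_neg]
  simp only [HqNorm, e]

lemma HqNorm_add_le {q llo lhi : ℝ} (hq : 1 ≤ q) {F G : ℂ → ℂ}
    (hF : ContinuousOn F (strip llo lhi)) (hG : ContinuousOn G (strip llo lhi)) :
    HqNorm q llo lhi (fun s => F s + G s) ≤ HqNorm q llo lhi F + HqNorm q llo lhi G := by
  have hq0 : (0:ℝ) < q := lt_of_lt_of_le one_pos hq
  rw [HqNorm]
  refine iSup₂_le fun l hl => ?_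
  set c0 := ENNReal.ofReal (1 / (2 * Real.pi)) with hc0_def
  have hmF := line_measurable hF hl q
  have hmG := line_measurable hG hl q
  have htri : (c0 * ∫⁻ ω : ℝ, (‖F (-l + ω * Complex.I) + G (-l + ω * Complex.I)‖₊ : ENNReal) ^ q)
        ^ (1/q)
      ≤ (c0 * ∫⁻ ω : ℝ, (‖F (-l + ω * Complex.I)‖₊ : ENNReal) ^ q) ^ (1/q)
        + (c0 * ∫⁻ ω : ℝ, (‖G (-l + ω * Complex.I)‖₊ : ENNReal) ^ q) ^ (1/q) := by
    have hmink := ENNReal.lintegral_Lp_add_le (μ := volume)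
      (f := fun ω : ℝ => (‖F (-l + ω * Complex.I)‖₊ : ENNReal))
      (g := fun ω : ℝ => (‖G (-l + ω * Complex.I)‖₊ : ENNReal))
      ((line_continuous hF hl).nnnorm.measurable.coe_nnreal_ennreal.aemeasurable)
      ((line_continuous hG hl).nnnorm.measurable.coe_nnreal_ennreal.aemeasurable) hq
    have hptw : (∫⁻ ω : ℝ, (‖F (-l + ω * Complex.I) + G (-l + ω * Complex.I)‖₊ : ENNReal) ^ q)
        ≤ ∫⁻ ω : ℝ, ((‖F (-l + ω * Complex.I)‖₊ : ENNReal)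
          + (‖G (-l + ω * Complex.I)‖₊ : ENNReal)) ^ q := by
      refine lintegral_mono fun ω => ENNReal.rpow_le_rpow ?_ hq0.le
      rw [← ENNReal.coe_add]
      exact_mod_cast nnnorm_add_le _ _
    have hc0top : c0 ≠ ⊤ := ENNReal.ofReal_ne_top
    calc (c0 * ∫⁻ ω : ℝ, (‖F (-l + ω * Complex.I) + G (-l + ω * Complex.I)‖₊ : ENNReal) ^ q)
          ^ (1/q)
        ≤ (c0 * ∫⁻ ω : ℝ, ((‖F (-l + ω * Complex.I)‖₊ : ENNReal)
            + (‖G (-l + ω * Complex.I)‖₊ : ENNReal)) ^ q) ^ (1/q) :=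
          ENNReal.rpow_le_rpow (mul_le_mul_right hptw _) (by positivity)
    _ = c0 ^ (1/q) * (∫⁻ ω : ℝ, ((‖F (-l + ω * Complex.I)‖₊ : ENNReal)
            + (‖G (-l + ω * Complex.I)‖₊ : ENNReal)) ^ q) ^ (1/q) :=
          ENNReal.mul_rpow_of_nonneg _ _ (by positivity)
    _ ≤ c0 ^ (1/q) * ((∫⁻ ω : ℝ, (‖F (-l + ω * Complex.I)‖₊ : ENNReal) ^ q) ^ (1/q)
            + (∫⁻ ω : ℝ, (‖G (-l + ω * Complex.I)‖₊ : ENNReal) ^ q) ^ (1/q)) :=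
          mul_le_mul_right hmink _
    _ = _ := by
          rw [mul_add, ← ENNReal.mul_rpow_of_nonneg _ _ (by positivity : (0:ℝ) ≤ 1/q),
            ← ENNReal.mul_rpow_of_nonneg _ _ (by positivity : (0:ℝ) ≤ 1/q)]
  refine le_trans htri (add_le_add ?_ ?_)
  · rw [HqNorm, hc0_def]
    exact le_iSup₂ (f := fun (l' : ℝ) (_ : l' ∈ Set.Ioo llo lhi) =>
      (ENNReal.ofReal (1 / (2 * Real.pi)) *
        ∫⁻ ω : ℝ, (‖F (-l' + ω * Complex.I)‖₊ : ENNReal) ^ q) ^ (1 / q)) l hl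
  · rw [HqNorm, hc0_def]
    exact le_iSup₂ (f := fun (l' : ℝ) (_ : l' ∈ Set.Ioo llo lhi) =>
      (ENNReal.ofReal (1 / (2 * Real.pi)) *
        ∫⁻ ω : ℝ, (‖G (-l' + ω * Complex.I)‖₊ : ENNReal) ^ q) ^ (1 / q)) l hl

/-- Completeness of the Hardy space `H_q` on a vertical strip, `1 ≤ q < ∞`
(Theorem 1 of the paper). -/
theorem hardy_space_strip_complete (q llo lhi : ℝ) (hq : 1 ≤ q) (hl : llo < lhi)
    (f : ℕ → ℂ → ℂ)
    (hf_an : ∀ n, DifferentiableOn ℂ (f n) (strip llo lhi))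
    (hf_fin : ∀ n, HqNorm q llo lhi (f n) < ⊤)
    (hf_cauchy : ∀ ε : ℝ, 0 < ε → ∃ N : ℕ, ∀ m n : ℕ, N ≤ m → N ≤ n →
      HqNorm q llo lhi (fun s => f m s - f n s) < ENNReal.ofReal ε) :
    ∃ g : ℂ → ℂ, DifferentiableOn ℂ g (strip llo lhi) ∧
      HqNorm q llo lhi g < ⊤ ∧
      Tendsto (fun n => HqNorm q llo lhi (fun s => f n s - g s)) atTop (nhds 0) := by
  have hq0 : (0:ℝ) < q := lt_of_lt_of_le one_pos hq
  have hSopen : IsOpen (strip llo lhi) := isOpen_strip llo lhi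
  -- a reusable Cauchy estimate
  have hkey : ∀ δ : ℝ, 0 < δ → ∀ ε : ℝ, 0 < ε → ∃ N : ℕ, ∀ m n : ℕ, N ≤ m → N ≤ n →
      ∀ c : ℂ, closedBall c δ ⊆ strip llo lhi → dist (f m c) (f n c) < ε := by
    intro δ hδ ε hε
    set a := (4/δ) ^ (1/q) with ha_def
    have ha0 : 0 < a := by positivity
    have hε'0 : 0 < ε / (a + 1) := by positivity
    obtain ⟨N, hN⟩ := hf_cauchy (ε / (a + 1)) hε'0
    refine ⟨N, fun m n hm hn c hball => ?_⟩
    have hdiff : DifferentiableOn ℂ (fun s => f m s - f n s) (strip llo lhi) :=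
      (hf_an m).sub (hf_an n)
    have hb := pointwise_bound hq hdiff hδ hball
    have hlt : HqNorm q llo lhi (fun s => f m s - f n s) ≤ ENNReal.ofReal (ε / (a + 1)) :=
      (hN m n hm hn).le
    have h2 : (‖f m c - f n c‖₊ : ENNReal) ≤ ENNReal.ofReal (a * (ε / (a + 1))) := by
      rw [ENNReal.ofReal_mul ha0.le]
      exact le_trans hb (mul_le_mul_right hlt _)
    have h3 : a * (ε / (a + 1)) < ε := by
      rw [div_eq_inv_mul, ← mul_assoc]
      have : a * (a + 1)⁻¹ < 1 := by
        rw [mul_inv_lt_iff₀ (by positivity), one_mul]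
        linarith
      calc a * (a + 1)⁻¹ * ε < 1 * ε := by exact mul_lt_mul_of_pos_right this hε
      _ = ε := one_mul ε
    have h4 : (‖f m c - f n c‖₊ : ENNReal) < ENNReal.ofReal ε :=
      lt_of_le_of_lt h2 ((ENNReal.ofReal_lt_ofReal_iff hε).mpr h3)
    rw [← ofReal_norm_eq_coe_nnnorm] at h4
    rw [dist_eq_norm]
    by_contra hcon
    push_neg at hcon
    exact absurd (ENNReal.ofReal_le_ofReal hcon) (not_le.mpr h4)
  -- pointwise limit
  have hcauchy_pt : ∀ c ∈ strip llo lhi, ∃ L : ℂ, Tendsto (fun n => f n c) atTop (nhds L) := by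
    intro c hc
    have : CauchySeq (fun n => f n c) := by
      rw [Metric.cauchySeq_iff]
      intro ε hε
      obtain ⟨δ', hδ', hball⟩ := Metric.isOpen_iff.mp hSopen c hc
      have hδ2 : (0:ℝ) < δ'/2 := by positivity
      have hsub : closedBall c (δ'/2) ⊆ strip llo lhi :=
        subset_trans (closedBall_subset_ball (by linarith)) hball
      obtain ⟨N, hN⟩ := hkey (δ'/2) hδ2 ε hε
      exact ⟨N, fun m hm n hn => hN m n hm hn c hsub⟩
    exact cauchySeq_tendsto_of_complete this
  choose g0 hg0 using hcauchy_pt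
  classical
  set g : ℂ → ℂ := fun c => if hc : c ∈ strip llo lhi then g0 c hc else 0 with hg_def
  have htend : ∀ c ∈ strip llo lhi, Tendsto (fun n => f n c) atTop (nhds (g c)) := by
    intro c hc
    rw [hg_def]
    simp only [dif_pos hc]
    exact hg0 c hc
  -- local uniform convergence and differentiability of g
  have hTLU : TendstoLocallyUniformlyOn f g atTop (strip llo lhi) := by
    rw [tendstoLocallyUniformlyOn_iff_forall_isCompact hSopen]
    intro K hKS hK
    have hUC : UniformCauchySeqOn f atTop K := by
      rw [Metric.uniformCauchySeqOn_iff]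
      intro ε hε
      obtain ⟨δ, hδpos, hδsub⟩ := hK.exists_cthickening_subset_open hSopen hKS
      obtain ⟨N, hN⟩ := hkey δ hδpos ε hε
      refine ⟨N, fun m hm n hn x hx => ?_⟩
      exact hN m n hm hn x (subset_trans (closedBall_subset_cthickening hx δ) hδsub)
    exact hUC.tendstoUniformlyOn_of_tendsto (fun x hx => htend x (hKS hx))
  have hgdiff : DifferentiableOn ℂ g (strip llo lhi) :=
    hTLU.differentiableOn (Filter.Eventually.of_forall hf_an) hSopen
  have hgcont : ContinuousOn g (strip llo lhi) := hgdiff.continuousOn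
  have hc2 : ENNReal.ofReal (1/(2*Real.pi)) * ENNReal.ofReal (2*Real.pi) = 1 := by
    rw [← ENNReal.ofReal_mul (by positivity), one_div,
      inv_mul_cancel₀ Real.two_pi_pos.ne', ENNReal.ofReal_one]
  -- tail bound
  have htail : ∀ ε : ℝ, 0 < ε → ∃ N, ∀ n, N ≤ n →
      HqNorm q llo lhi (fun s => f n s - g s) ≤ ENNReal.ofReal ε := by
    intro ε hε
    obtain ⟨N, hN⟩ := hf_cauchy ε hε
    refine ⟨N, fun n hn => ?_⟩
    rw [HqNorm]
    refine iSup₂_le fun l hl => ?_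
    have hmeas : ∀ m : ℕ, Measurable (fun ω : ℝ =>
        (‖f n (-l + ω * Complex.I) - f m (-l + ω * Complex.I)‖₊ : ENNReal) ^ q) := fun m =>
      line_measurable (((hf_an n).sub (hf_an m)).continuousOn) hl q
    have hptw : ∀ ω : ℝ, (‖f n (-l + ω * Complex.I) - g (-l + ω * Complex.I)‖₊ : ENNReal) ^ q
        = liminf (fun m => (‖f n (-l + ω * Complex.I) - f m (-l + ω * Complex.I)‖₊ : ENNReal) ^ q)
          atTop := by
      intro ω
      have hz := mem_strip_line hl ω
      have h1 : Tendsto (fun m => f m (-l + ω * Complex.I)) atTop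
          (nhds (g (-l + ω * Complex.I))) := htend _ hz
      have h2 : Tendsto (fun m => f n (-l + ω * Complex.I) - f m (-l + ω * Complex.I)) atTop
          (nhds (f n (-l + ω * Complex.I) - g (-l + ω * Complex.I))) :=
        tendsto_const_nhds.sub h1
      have h3 := ((ENNReal.continuous_rpow_const (y := q)).tendsto _).comp
        (ENNReal.tendsto_coe.mpr h2.nnnorm)
      exact (h3.liminf_eq).symm
    have hFatou : (∫⁻ ω : ℝ, (‖f n (-l + ω * Complex.I) - g (-l + ω * Complex.I)‖₊ : ENNReal) ^ q)
        ≤ liminf (fun m => ∫⁻ ω : ℝ,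
          (‖f n (-l + ω * Complex.I) - f m (-l + ω * Complex.I)‖₊ : ENNReal) ^ q) atTop := by
      rw [lintegral_congr hptw]
      exact lintegral_liminf_le hmeas
    have hbound : ∀ m : ℕ, N ≤ m → (∫⁻ ω : ℝ,
        (‖f n (-l + ω * Complex.I) - f m (-l + ω * Complex.I)‖₊ : ENNReal) ^ q)
        ≤ ENNReal.ofReal (2*Real.pi) * ENNReal.ofReal ε ^ q := by
      intro m hm
      have h5 := line_le_pow hq (fun s => f n s - f m s) hl
      have h6 : HqNorm q llo lhi (fun s => f n s - f m s) ≤ ENNReal.ofReal ε := by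
        rw [HqNorm_sub_comm]
        exact (hN m n hm hn).le
      have h7 : ENNReal.ofReal (1/(2*Real.pi)) * (∫⁻ ω : ℝ,
          (‖f n (-l + ω * Complex.I) - f m (-l + ω * Complex.I)‖₊ : ENNReal) ^ q)
          ≤ ENNReal.ofReal ε ^ q :=
        le_trans h5 (ENNReal.rpow_le_rpow h6 hq0.le)
      calc (∫⁻ ω : ℝ, (‖f n (-l + ω * Complex.I) - f m (-l + ω * Complex.I)‖₊ : ENNReal) ^ q)
          = ENNReal.ofReal (2*Real.pi) * (ENNReal.ofReal (1/(2*Real.pi)) * ∫⁻ ω : ℝ,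
            (‖f n (-l + ω * Complex.I) - f m (-l + ω * Complex.I)‖₊ : ENNReal) ^ q) := by
            rw [← mul_assoc, mul_comm (ENNReal.ofReal (2*Real.pi)), hc2, one_mul]
      _ ≤ ENNReal.ofReal (2*Real.pi) * ENNReal.ofReal ε ^ q := mul_le_mul_right h7 _
    have h8 : liminf (fun m => ∫⁻ ω : ℝ,
        (‖f n (-l + ω * Complex.I) - f m (-l + ω * Complex.I)‖₊ : ENNReal) ^ q) atTop
        ≤ ENNReal.ofReal (2*Real.pi) * ENNReal.ofReal ε ^ q := by
      have h9 : liminf (fun _ : ℕ => ENNReal.ofReal (2*Real.pi) * ENNReal.ofReal ε ^ q) atTop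
          = ENNReal.ofReal (2*Real.pi) * ENNReal.ofReal ε ^ q := liminf_const _
      rw [← h9]
      refine liminf_le_liminf ?_
      filter_upwards [eventually_ge_atTop N] with m hm
      exact hbound m hm
    have h10 : (ENNReal.ofReal (1 / (2 * Real.pi)) * ∫⁻ ω : ℝ,
        (‖f n (-l + ω * Complex.I) - g (-l + ω * Complex.I)‖₊ : ENNReal) ^ q)
        ≤ ENNReal.ofReal ε ^ q := by
      calc (ENNReal.ofReal (1 / (2 * Real.pi)) * ∫⁻ ω : ℝ,
          (‖f n (-l + ω * Complex.I) - g (-l + ω * Complex.I)‖₊ : ENNReal) ^ q)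
          ≤ ENNReal.ofReal (1 / (2 * Real.pi)) *
            (ENNReal.ofReal (2*Real.pi) * ENNReal.ofReal ε ^ q) :=
            mul_le_mul_right (le_trans hFatou h8) _
      _ = ENNReal.ofReal ε ^ q := by rw [← mul_assoc, hc2, one_mul]
    calc (ENNReal.ofReal (1 / (2 * Real.pi)) * ∫⁻ ω : ℝ,
        (‖f n (-l + ω * Complex.I) - g (-l + ω * Complex.I)‖₊ : ENNReal) ^ q) ^ (1/q)
        ≤ (ENNReal.ofReal ε ^ q) ^ (1/q) := ENNReal.rpow_le_rpow h10 (by positivity)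
    _ = ENNReal.ofReal ε := by
        rw [← ENNReal.rpow_mul, mul_one_div_cancel hq0.ne', ENNReal.rpow_one]
  -- finiteness of HqNorm g
  obtain ⟨N1, hN1⟩ := htail 1 one_pos
  have hgfin : HqNorm q llo lhi g < ⊤ := by
    have e : (fun s : ℂ => (g s - f N1 s) + f N1 s) = g := by funext s; ring
    have h1 := HqNorm_add_le (F := fun s => g s - f N1 s) hq (hgcont.sub (hf_an N1).continuousOn) (hf_an N1).continuousOn
    rw [e] at h1
    have h2 : HqNorm q llo lhi (fun s => g s - f N1 s) ≤ ENNReal.ofReal 1 := by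
      rw [HqNorm_sub_comm]
      exact hN1 N1 le_rfl
    refine lt_of_le_of_lt h1 (ENNReal.add_lt_top.mpr ⟨?_, hf_fin N1⟩)
    exact lt_of_le_of_lt h2 ENNReal.ofReal_lt_top
  refine ⟨g, hgdiff, hgfin, ?_⟩
  rw [ENNReal.tendsto_nhds_zero]
  intro ε hε
  set r := min ε 1 with hr_def
  have hr0 : (0:ENNReal) < r := lt_min hε one_pos
  have hrtop : r ≠ ⊤ := ne_top_of_le_ne_top ENNReal.one_ne_top (min_le_right _ _)
  have hrr : 0 < r.toReal := ENNReal.toReal_pos hr0.ne' hrtop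
  obtain ⟨N, hN⟩ := htail r.toReal hrr
  filter_upwards [eventually_ge_atTop N] with n hn
  calc HqNorm q llo lhi (fun s => f n s - g s) ≤ ENNReal.ofReal r.toReal := hN n hn
  _ = r := ENNReal.ofReal_toReal hrtop
  _ ≤ ε := min_le_left _ _
end

section
/- Let A be an n×n complex matrix and let s ∈ ℂ be such that Re(s) < Re(μ) for every eigenvalue μ of A. Then the matrix sI - A is invertible, the function t ↦ e^{-st} exp(tA) is integrable on (-∞, 0], and ∫_{-∞}^0 e^{-st} exp(tA) dt = -(sI - A)^{-1}. -/
open MeasureTheory Matrix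

section LapAux

open NormedSpace Nat

lemma lap_eps {S : Set ℝ} (hfin : S.Finite) (hpos : ∀ x ∈ S, 0 < x) :
    ∃ ε, 0 < ε ∧ ∀ x ∈ S, ε ≤ x := by
  classical
  rcases hfin.toFinset.eq_empty_or_nonempty with h | h
  · exact ⟨1, one_pos, fun x hx => absurd (hfin.mem_toFinset.mpr hx)
      (by simp [h])⟩
  · refine ⟨hfin.toFinset.min' h, hpos _ (hfin.mem_toFinset.mp (hfin.toFinset.min'_mem h)),
      fun x hx => Finset.min'_le _ _ (hfin.mem_toFinset.mpr hx)⟩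

lemma lap_int {b : ℝ} (hb : 0 < b) :
    IntegrableOn (fun t : ℝ => Real.exp (b * t)) (Set.Iic (0:ℝ)) := by
  have A : MeasurableEmbedding (fun x : ℝ => -x) :=
    (Homeomorph.neg ℝ).isClosedEmbedding.measurableEmbedding
  have h0 : IntegrableOn (fun x : ℝ => Real.exp (-b * x)) (Set.Ici (0:ℝ)) :=
    (integrableOn_Ici_iff_integrableOn_Ioi).mpr (exp_neg_integrableOn_Ioi 0 hb)
  have hpre : Set.Ici (0:ℝ) = (fun x : ℝ => -x) ⁻¹' (Set.Iic (0:ℝ)) := by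
    ext x; simp
  have hmap : Measure.map (fun x : ℝ => -x) ((volume : Measure ℝ).restrict (Set.Ici (0:ℝ)))
      = (volume : Measure ℝ).restrict (Set.Iic (0:ℝ)) := by
    rw [hpre, ← Measure.restrict_map A.measurable measurableSet_Iic,
      Measure.map_neg_eq_self (volume : Measure ℝ)]
  unfold IntegrableOn
  rw [← hmap, A.integrable_map_iff]
  exact h0.congr_fun (fun x _ => by simp [Function.comp, mul_comm]) measurableSet_Ici

lemma lap_real_bound {a : ℝ} (ha : 0 < a) (j : ℕ) {t : ℝ} (ht : t ≤ 0) :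
    (j ! : ℝ)⁻¹ * |t| ^ j * Real.exp (a * t) ≤ (2 / a) ^ j * Real.exp ((a / 2) * t) := by
  have hx : 0 ≤ a / 2 * (-t) := by nlinarith
  have h1 : (a / 2 * (-t)) ^ j / j ! ≤ Real.exp (a / 2 * (-t)) := by
    calc (a / 2 * (-t)) ^ j / j !
        ≤ ∑ i ∈ Finset.range (j + 1), (a / 2 * (-t)) ^ i / i ! :=
          Finset.single_le_sum (f := fun i => (a / 2 * (-t)) ^ i / i !)
            (fun i _ => by positivity) (Finset.self_mem_range_succ j)
      _ ≤ Real.exp (a / 2 * (-t)) := Real.sum_le_exp_of_nonneg hx _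
  have habs : |t| = -t := abs_of_nonpos ht
  have hfac : (0:ℝ) < j ! := by positivity
  calc (j ! : ℝ)⁻¹ * |t| ^ j * Real.exp (a * t)
      = ((2 / a) ^ j * ((a / 2 * (-t)) ^ j / j !)) * Real.exp (a * t) := by
        rw [habs, mul_pow]
        have := ha.ne'
        field_simp
        have h2 : (1/2:ℝ)^j * 2^j = 1 := by rw [← mul_pow]; norm_num
        have h3 : a^j * a⁻¹^j = 1 := by rw [← mul_pow, mul_inv_cancel₀ this, one_pow]
        linear_combination (-(t^j*(-1)^j)) * h3 - (t^j*(-1)^j*a^j*a⁻¹^j) * h2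
    _ ≤ ((2 / a) ^ j * Real.exp (a / 2 * (-t))) * Real.exp (a * t) := by
        apply mul_le_mul_of_nonneg_right
          (mul_le_mul_of_nonneg_left h1 (by positivity)) (Real.exp_nonneg _)
    _ = (2 / a) ^ j * Real.exp (a / 2 * t) := by
        rw [mul_assoc, ← Real.exp_add]
        ring_nf

section linfty
attribute [local instance] Matrix.linftyOpNormedRing Matrix.linftyOpNormedAlgebra

lemma lap_slope (n : ℕ) (N : Matrix (Fin n) (Fin n) ℂ) (t : ℝ) :
    Filter.Tendsto (slope (fun u : ℝ => exp (u • N)) t) (nhdsWithin t {t}ᶜ)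
      (nhds (exp (t • N) * N)) := by
  exact hasDerivAt_iff_tendsto_slope.mp (hasDerivAt_exp_smul_const N t)

lemma lap_summable (n : ℕ) (X : Matrix (Fin n) (Fin n) ℂ) :
    Summable (fun j : ℕ => (j ! : ℂ)⁻¹ • X ^ j) :=
  expSeries_summable' (𝕂 := ℂ) X

lemma lap_exp_smul_one (n : ℕ) (c : ℂ) :
    exp (c • (1 : Matrix (Fin n) (Fin n) ℂ)) = Complex.exp c • 1 := by
  have hcont : Continuous (algebraMap ℂ (Matrix (Fin n) (Fin n) ℂ)) := by
    have : (fun c : ℂ => algebraMap ℂ (Matrix (Fin n) (Fin n) ℂ) c)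
        = fun c : ℂ => c • (1 : Matrix (Fin n) (Fin n) ℂ) := by
      funext c; rw [Algebra.algebraMap_eq_smul_one]
    rw [show (algebraMap ℂ (Matrix (Fin n) (Fin n) ℂ) : ℂ → Matrix (Fin n) (Fin n) ℂ)
      = fun c : ℂ => algebraMap ℂ (Matrix (Fin n) (Fin n) ℂ) c from rfl, this]
    exact continuous_id.smul continuous_const
  have h := map_exp (algebraMap ℂ (Matrix (Fin n) (Fin n) ℂ)) hcont c
  rw [Algebra.algebraMap_eq_smul_one, Algebra.algebraMap_eq_smul_one] at h
  rw [Complex.exp_eq_exp_ℂ]; exact h.symm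

end linfty

section sup
attribute [local instance] Matrix.normedAddCommGroup Matrix.normedSpace

lemma lap_split (n : ℕ) (N : Matrix (Fin n) (Fin n) ℂ) (μ : ℂ) (t : ℝ) :
    t • N = (μ * (t:ℂ)) • (1 : Matrix (Fin n) (Fin n) ℂ) + t • (N - μ • 1) := by
  ext i j
  by_cases h : i = j <;>
    simp [Matrix.smul_apply, Matrix.add_apply, Matrix.sub_apply, Matrix.one_apply, h,
      Complex.real_smul, smul_eq_mul] <;> ring

lemma lap_component_eq (n : ℕ) (N : Matrix (Fin n) (Fin n) ℂ) (μ : ℂ) (k : ℕ)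
    (w : Fin n → ℂ)
    (hk : ∀ j, k ≤ j → (N - μ • 1) ^ j *ᵥ w = 0) (t : ℝ) :
    exp (t • N) *ᵥ w =
      Complex.exp (μ * t) •
        ∑ j ∈ Finset.range k, (j ! : ℂ)⁻¹ • (t ^ j : ℝ) • ((N - μ • 1) ^ j *ᵥ w) := by
  set P := N - μ • (1 : Matrix (Fin n) (Fin n) ℂ) with hP
  have hcomm : Commute ((μ * (t:ℂ)) • (1 : Matrix (Fin n) (Fin n) ℂ)) (t • P) :=
    (Commute.one_left _).smul_left _
  rw [lap_split n N μ t, Matrix.exp_add_of_commute _ _ hcomm, lap_exp_smul_one,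
    smul_mul_assoc, one_mul, Matrix.smul_mulVec]
  congr 1
  have hL : ∃ L : Matrix (Fin n) (Fin n) ℂ →L[ℂ] (Fin n → ℂ), ∀ X, L X = X *ᵥ w := by
    refine ⟨LinearMap.toContinuousLinearMap
      { toFun := fun X => X *ᵥ w
        map_add' := fun X Y => Matrix.add_mulVec X Y w
        map_smul' := fun c X => Matrix.smul_mulVec c X w }, fun X => rfl⟩
  obtain ⟨L, hLa⟩ := hL
  have hsum : HasSum (fun j : ℕ => (j ! : ℂ)⁻¹ • (t • P) ^ j) (exp (t • P)) := by
    rw [exp_eq_tsum (𝕂 := ℂ)]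
    exact (lap_summable n (t • P)).hasSum
  have h1 : HasSum (fun j : ℕ => (j ! : ℂ)⁻¹ • ((t:ℝ) ^ j) • (P ^ j *ᵥ w))
      (exp (t • P) *ᵥ w) := by
    have := L.hasSum hsum
    simp only [hLa] at this
    convert this using 2 with j
    rw [smul_pow, Matrix.smul_mulVec, Matrix.smul_mulVec]
  have h2 : HasSum (fun j : ℕ => (j ! : ℂ)⁻¹ • ((t:ℝ) ^ j) • (P ^ j *ᵥ w))
      (∑ j ∈ Finset.range k, (j ! : ℂ)⁻¹ • (t ^ j : ℝ) • (P ^ j *ᵥ w)) := by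
    apply hasSum_sum_of_ne_finset_zero
    intro j hj
    rw [Finset.mem_range, not_lt] at hj
    rw [hk j hj, smul_zero, smul_zero]
  exact h1.unique h2

lemma lap_component_bound (n : ℕ) (N : Matrix (Fin n) (Fin n) ℂ) (μ : ℂ) (hμ : 0 < μ.re)
    (w : Fin n → ℂ)
    (hw : w ∈ Module.End.maxGenEigenspace (Matrix.toLinAlgEquiv' N) μ) :
    ∃ C, 0 ≤ C ∧ ∀ t : ℝ, t ≤ 0 →
      ‖exp (t • N) *ᵥ w‖ ≤ C * Real.exp ((μ.re / 2) * t) := by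
  obtain ⟨k, hk⟩ := (Module.End.mem_maxGenEigenspace _ _ _).mp hw
  have hPj : ∀ j : ℕ, (N - μ • 1) ^ j *ᵥ w
      = ((Matrix.toLinAlgEquiv' N - μ • 1) ^ j) w := by
    intro j
    have h : (Matrix.toLinAlgEquiv' N - μ • 1) ^ j
        = Matrix.toLinAlgEquiv' ((N - μ • 1) ^ j) := by
      rw [map_pow, map_sub, _root_.map_smul, _root_.map_one]
    rw [h]
    rfl
  have hk' : ∀ j, k ≤ j → (N - μ • 1) ^ j *ᵥ w = 0 := by
    intro j hj
    obtain ⟨m, rfl⟩ : ∃ m, j = m + k := ⟨j - k, (Nat.sub_add_cancel hj).symm⟩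
    rw [hPj, pow_add, Module.End.mul_apply, hk]
    simp
  refine ⟨∑ j ∈ Finset.range k, ‖(N - μ • 1) ^ j *ᵥ w‖ * (2 / μ.re) ^ j,
    Finset.sum_nonneg fun j _ => by positivity, fun t ht => ?_⟩
  rw [lap_component_eq n N μ k w hk' t]
  rw [norm_smul]
  have habs : ‖Complex.exp (μ * (t:ℂ))‖ = Real.exp (μ.re * t) := by
    rw [Complex.norm_exp]
    congr 1
    simp [Complex.mul_re]
  rw [habs]
  calc Real.exp (μ.re * t) * ‖∑ j ∈ Finset.range k,
        (j ! : ℂ)⁻¹ • (t ^ j : ℝ) • ((N - μ • 1) ^ j *ᵥ w)‖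
      ≤ Real.exp (μ.re * t) * ∑ j ∈ Finset.range k,
          (j ! : ℝ)⁻¹ * |t| ^ j * ‖(N - μ • 1) ^ j *ᵥ w‖ := by
        apply mul_le_mul_of_nonneg_left _ (Real.exp_nonneg _)
        refine le_trans (norm_sum_le _ _) (le_of_eq (Finset.sum_congr rfl fun j _ => ?_))
        rw [norm_smul, norm_smul, norm_inv, Complex.norm_natCast, norm_pow,
          Real.norm_eq_abs]
        ring
    _ = ∑ j ∈ Finset.range k,
          ((j ! : ℝ)⁻¹ * |t| ^ j * Real.exp (μ.re * t)) * ‖(N - μ • 1) ^ j *ᵥ w‖ := by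
        rw [Finset.mul_sum]
        exact Finset.sum_congr rfl fun j _ => by ring
    _ ≤ ∑ j ∈ Finset.range k,
          ((2 / μ.re) ^ j * Real.exp ((μ.re / 2) * t)) * ‖(N - μ • 1) ^ j *ᵥ w‖ := by
        refine Finset.sum_le_sum fun j _ => ?_
        exact mul_le_mul_of_nonneg_right (lap_real_bound hμ j ht) (norm_nonneg _)
    _ = (∑ j ∈ Finset.range k, ‖(N - μ • 1) ^ j *ᵥ w‖ * (2 / μ.re) ^ j)
          * Real.exp ((μ.re / 2) * t) := by
        rw [Finset.sum_mul]
        exact Finset.sum_congr rfl fun j _ => by ring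

lemma lap_vec_bound (n : ℕ) (N : Matrix (Fin n) (Fin n) ℂ) {ε : ℝ} (hε : 0 < ε)
    (hspec : ∀ μ ∈ spectrum ℂ N, ε ≤ μ.re) (v : Fin n → ℂ) :
    ∃ C, 0 ≤ C ∧ ∀ t : ℝ, t ≤ 0 →
      ‖exp (t • N) *ᵥ v‖ ≤ C * Real.exp ((ε / 2) * t) := by
  classical
  set f : Module.End ℂ (Fin n → ℂ) := Matrix.toLinAlgEquiv' N with hf
  have htop : v ∈ ⨆ μ : ℂ, f.maxGenEigenspace μ := by
    rw [Module.End.iSup_maxGenEigenspace_eq_top]; trivial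
  rw [Submodule.mem_iSup_iff_exists_finsupp] at htop
  obtain ⟨c, hc, hsum⟩ := htop
  have key : ∀ μ ∈ c.support, ∃ C, 0 ≤ C ∧ ∀ t : ℝ, t ≤ 0 →
      ‖exp (t • N) *ᵥ c μ‖ ≤ C * Real.exp ((ε / 2) * t) := by
    intro μ hμs
    have hne : c μ ≠ 0 := Finsupp.mem_support_iff.mp hμs
    obtain ⟨k, hk⟩ := (Module.End.mem_maxGenEigenspace _ _ _).mp (hc μ)
    have heig : f.HasEigenvalue μ := by
      apply Module.End.hasEigenvalue_of_hasGenEigenvalue (k := k)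
      refine Submodule.ne_bot_iff _ |>.mpr ⟨c μ, ?_, hne⟩
      rw [Module.End.mem_genEigenspace_nat]
      exact hk
    have hμspec : μ ∈ spectrum ℂ N := by
      rw [← AlgEquiv.spectrum_eq (Matrix.toLinAlgEquiv' (R := ℂ) (n := Fin n)) N]
      exact heig.mem_spectrum
    have hμre : ε ≤ μ.re := hspec μ hμspec
    obtain ⟨C, hC0, hCb⟩ := lap_component_bound n N μ (lt_of_lt_of_le hε hμre) (c μ) (hc μ)
    refine ⟨C, hC0, fun t ht => le_trans (hCb t ht) ?_⟩
    apply mul_le_mul_of_nonneg_left _ hC0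
    apply Real.exp_le_exp.mpr
    nlinarith
  choose C hC0 hCb using key
  refine ⟨∑ μ ∈ c.support.attach, C μ.1 μ.2,
    Finset.sum_nonneg fun μ _ => hC0 μ.1 μ.2, fun t ht => ?_⟩
  have hv : exp (t • N) *ᵥ v = ∑ μ ∈ c.support, exp (t • N) *ᵥ c μ := by
    rw [← hsum, Finsupp.sum]
    show (Matrix.mulVecLin (exp (t • N))) _ = _
    rw [map_sum]
    rfl
  rw [hv]
  calc ‖∑ μ ∈ c.support, exp (t • N) *ᵥ c μ‖
      ≤ ∑ μ ∈ c.support, ‖exp (t • N) *ᵥ c μ‖ := norm_sum_le _ _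
    _ = ∑ μ ∈ c.support.attach, ‖exp (t • N) *ᵥ c μ.1‖ :=
        (Finset.sum_attach _ _).symm
    _ ≤ ∑ μ ∈ c.support.attach, C μ.1 μ.2 * Real.exp ((ε / 2) * t) :=
        Finset.sum_le_sum fun μ _ => hCb μ.1 μ.2 t ht
    _ = (∑ μ ∈ c.support.attach, C μ.1 μ.2) * Real.exp ((ε / 2) * t) :=
        (Finset.sum_mul _ _ _).symm

lemma lap_norm_bound (n : ℕ) (N : Matrix (Fin n) (Fin n) ℂ) {ε : ℝ} (hε : 0 < ε)
    (hspec : ∀ μ ∈ spectrum ℂ N, ε ≤ μ.re) :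
    ∃ C, 0 ≤ C ∧ ∀ t : ℝ, t ≤ 0 →
      ‖exp (t • N)‖ ≤ C * Real.exp ((ε / 2) * t) := by
  have key := fun k : Fin n => lap_vec_bound n N hε hspec (Pi.single k 1)
  choose C hC0 hCb using key
  refine ⟨∑ k, C k, Finset.sum_nonneg fun k _ => hC0 k, fun t ht => ?_⟩
  rw [Matrix.norm_le_iff (mul_nonneg (Finset.sum_nonneg fun k _ => hC0 k) (Real.exp_nonneg _))]
  intro i j
  have h1 : exp (t • N) i j = (exp (t • N) *ᵥ Pi.single j 1) i := by
    rw [Matrix.mulVec_single]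
    simp
  rw [h1]
  calc ‖(exp (t • N) *ᵥ Pi.single j 1) i‖
      ≤ ‖exp (t • N) *ᵥ Pi.single j 1‖ := norm_le_pi_norm _ i
    _ ≤ C j * Real.exp ((ε / 2) * t) := hCb j t ht
    _ ≤ (∑ k, C k) * Real.exp ((ε / 2) * t) :=
        mul_le_mul_of_nonneg_right
          (Finset.single_le_sum (fun k _ => hC0 k) (Finset.mem_univ j)) (Real.exp_nonneg _)

end sup

end LapAux

attribute [local instance] Matrix.normedAddCommGroup Matrix.normedSpace

instance Matrix.continuousENormOfNormedAddCommGroup {m n α : Type*} [Fintype m] [Fintype n]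
    [NormedAddCommGroup α] : ContinuousENorm (Matrix m n α) :=
  @SeminormedAddGroup.toContinuousENorm _ Matrix.seminormedAddCommGroup.toSeminormedAddGroup

/-- Anticausal Laplace transform of a matrix exponential: if `Re s < Re μ` for every
eigenvalue `μ` of `A`, then `sI - A` is invertible, `t ↦ e^{-st} exp(tA)` is
integrable on `(-∞,0]`, and `∫_{-∞}^0 e^{-st} exp(tA) dt = -(sI - A)⁻¹`. -/
theorem laplace_matrix_exp_anticausal (n : ℕ) (A : Matrix (Fin n) (Fin n) ℂ) (s : ℂ)
    (hs : ∀ μ ∈ spectrum ℂ A, s.re < μ.re) :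
    IsUnit (s • (1 : Matrix (Fin n) (Fin n) ℂ) - A) ∧
    IntegrableOn (fun t : ℝ => Complex.exp (-s * t) • NormedSpace.exp (t • A))
      (Set.Iic (0 : ℝ)) ∧
    ∫ t in Set.Iic (0 : ℝ), Complex.exp (-s * t) • NormedSpace.exp (t • A) =
      -(s • (1 : Matrix (Fin n) (Fin n) ℂ) - A)⁻¹ := by
  classical
  have hUnit : IsUnit (s • (1 : Matrix (Fin n) (Fin n) ℂ) - A) := by
    have hns : s ∉ spectrum ℂ A := fun h => lt_irrefl _ (hs s h)
    have := spectrum.notMem_iff.mp hns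
    rwa [Algebra.algebraMap_eq_smul_one] at this
  set N : Matrix (Fin n) (Fin n) ℂ := A - s • 1 with hN
  -- identity
  have hIdent : ∀ t : ℝ, Complex.exp (-s * t) • NormedSpace.exp (t • A)
      = NormedSpace.exp (t • N) := by
    intro t
    have hsplit : t • N = (-s * (t:ℂ)) • (1 : Matrix (Fin n) (Fin n) ℂ) + t • A := by
      ext i j
      by_cases h : i = j <;>
        simp [hN, Matrix.smul_apply, Matrix.add_apply, Matrix.sub_apply, Matrix.one_apply, h,
          Complex.real_smul, smul_eq_mul] <;> ring
    rw [hsplit, Matrix.exp_add_of_commute _ _ ((Commute.one_left _).smul_left _),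
      lap_exp_smul_one, smul_mul_assoc, one_mul]
  -- spectrum of N
  have hshift : ∀ μ : ℂ, μ ∈ spectrum ℂ N → (μ + s) ∈ spectrum ℂ A := by
    intro μ h
    rw [spectrum.mem_iff] at h ⊢
    intro hu
    apply h
    have heq : algebraMap ℂ (Matrix (Fin n) (Fin n) ℂ) μ - N
        = algebraMap ℂ (Matrix (Fin n) (Fin n) ℂ) (μ + s) - A := by
      rw [hN, Algebra.algebraMap_eq_smul_one, Algebra.algebraMap_eq_smul_one, add_smul]
      abel
    rw [heq]
    exact hu
  obtain ⟨ε, hε, hεle⟩ := lap_eps (S := Complex.re '' spectrum ℂ N)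
    ((N.finite_spectrum).image _)
    (by
      rintro x ⟨μ, hμ, rfl⟩
      have := hs (μ + s) (hshift μ hμ)
      simp only [Complex.add_re] at this
      linarith)
  have hspecN : ∀ μ ∈ spectrum ℂ N, ε ≤ μ.re := fun μ hμ => hεle μ.re ⟨μ, hμ, rfl⟩
  obtain ⟨C, hC0, hCb⟩ := lap_norm_bound n N hε hspecN
  -- derivative
  have hderiv : ∀ t : ℝ, HasDerivAt (fun u : ℝ => NormedSpace.exp (u • N))
      (NormedSpace.exp (t • N) * N) t :=
    fun t => hasDerivAt_iff_tendsto_slope.mpr (lap_slope n N t)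
  have hcont : Continuous (fun t : ℝ => NormedSpace.exp (t • N)) :=
    continuous_iff_continuousAt.mpr fun t => (hderiv t).continuousAt
  -- integrability
  have hInt : IntegrableOn (fun t : ℝ => NormedSpace.exp (t • N)) (Set.Iic (0:ℝ)) := by
    haveI : TopologicalSpace.PseudoMetrizableSpace (Matrix (Fin n) (Fin n) ℂ) :=
      inferInstanceAs (TopologicalSpace.PseudoMetrizableSpace (Fin n → Fin n → ℂ))
    refine Integrable.mono' ((lap_int (half_pos hε)).const_mul C)
      hcont.aestronglyMeasurable.restrict ?_
    rw [ae_restrict_iff' measurableSet_Iic]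
    exact ae_of_all _ fun t ht => by simpa [mul_comm] using hCb t ht
  have hIntS : IntegrableOn (fun t : ℝ => Complex.exp (-s * t) • NormedSpace.exp (t • A))
      (Set.Iic (0:ℝ)) :=
    hInt.congr_fun (fun t _ => (hIdent t).symm) measurableSet_Iic
  refine ⟨hUnit, hIntS, ?_⟩
  -- tendsto 0 at -∞
  have htend : Filter.Tendsto (fun t : ℝ => NormedSpace.exp (t • N))
      Filter.atBot (nhds 0) := by
    apply squeeze_zero_norm' (Filter.eventually_atBot.mpr ⟨0, fun t ht => hCb t ht⟩)
    · have h1 : Filter.Tendsto (fun t : ℝ => (ε / 2) * t) Filter.atBot Filter.atBot :=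
        Filter.tendsto_id.const_mul_atBot (half_pos hε)
      have h2 := Real.tendsto_exp_atBot.comp h1
      have h3 := h2.const_mul C
      simpa using h3
  -- integrability of derivative
  let R : Matrix (Fin n) (Fin n) ℂ →ₗ[ℂ] Matrix (Fin n) (Fin n) ℂ :=
    { toFun := fun X => X * N
      map_add' := fun X Y => add_mul X Y N
      map_smul' := fun c X => smul_mul_assoc c X N }
  let Rc := LinearMap.toContinuousLinearMap R
  have hRc : ∀ X, Rc X = X * N := fun X => rfl
  have hderint : IntegrableOn (fun t : ℝ => NormedSpace.exp (t • N) * N) (Set.Iic (0:ℝ)) := by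
    have := Rc.integrable_comp hInt
    exact this
  have hFTC := integral_Iic_of_hasDerivAt_of_tendsto' (a := (0:ℝ))
    (f := fun u : ℝ => NormedSpace.exp (u • N))
    (f' := fun t : ℝ => NormedSpace.exp (t • N) * N)
    (fun x _ => hderiv x) hderint htend
  have hFTC' : ∫ t in Set.Iic (0:ℝ), NormedSpace.exp (t • N) * N = 1 := by
    simpa using hFTC
  have hpull : ∫ t in Set.Iic (0:ℝ), NormedSpace.exp (t • N) * N
      = (∫ t in Set.Iic (0:ℝ), NormedSpace.exp (t • N)) * N := by
    have := Rc.integral_comp_comm hInt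
    exact this
  have hone : (∫ t in Set.Iic (0:ℝ), NormedSpace.exp (t • N)) * N = 1 := by
    rw [← hpull, hFTC']
  have hIv : ∫ t in Set.Iic (0:ℝ), Complex.exp (-s * t) • NormedSpace.exp (t • A)
      = ∫ t in Set.Iic (0:ℝ), NormedSpace.exp (t • N) :=
    setIntegral_congr_fun measurableSet_Iic fun t _ => hIdent t
  rw [hIv]
  have h1 : N⁻¹ = ∫ t in Set.Iic (0:ℝ), NormedSpace.exp (t • N) :=
    Matrix.inv_eq_left_inv hone
  have h2 : s • (1 : Matrix (Fin n) (Fin n) ℂ) - A = -N := by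
    rw [hN, neg_sub]
  have hNN : N⁻¹ * N = 1 := by rw [h1]; exact hone
  have h3 : (-N)⁻¹ = -(N⁻¹) := Matrix.inv_eq_left_inv (by rw [neg_mul_neg, hNN])
  rw [h2, h3, h1, neg_neg]
end

section
/- For i = 1, 2, let fᵢ : ℝ^{nᵢ} → ℝ^{nᵢ} be continuously differentiable with Jacobian ∂fᵢ, and let Bᵢ ∈ ℝ^{nᵢ×m}, Cᵢ ∈ ℝ^{m×nᵢ}, λ ≥ 0, γᵢ > 0, εᵢ > 0, and let Pᵢ ∈ ℝ^{nᵢ×nᵢ} be symmetric with exactly pᵢ negative eigenvalues, nᵢ - pᵢ positive eigenvalues and no zero eigenvalue. Suppose for each i and all xᵢ, δxᵢ ∈ ℝ^{nᵢ} and δuᵢ ∈ ℝ^m, writing δẋᵢ = ∂fᵢ(xᵢ)δxᵢ + Bᵢδuᵢ and δyᵢ = Cᵢδxᵢ, that 2 δẋᵢᵀ Pᵢ δxᵢ + 2λ δxᵢᵀ Pᵢ δxᵢ + εᵢ|δxᵢ|² ≤ -|δyᵢ|² + γᵢ²|δuᵢ|². If γ₁γ₂ < 1, then the closed-loop vector field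 F : ℝ^{n₁+n₂} → ℝ^{n₁+n₂}, F(x₁, x₂) = (f₁(x₁) - B₁C₂x₂ , f₂(x₂) + B₂C₁x₁), obtained from the negative feedback interconnection u₁ = -y₂, u₂ = y₁, satisfies: there exist ε > 0 and a symmetric P ∈ ℝ^{(n₁+n₂)×(n₁+n₂)} with exactly p₁ + p₂ negative eigenvalues, n₁ + n₂ - p₁ - p₂ positive eigenvalues and no zero eigenvalue, such that for all x, δx ∈ ℝ^{n₁+n₂}: 2 (∂F(x)δx)ᵀ P δx + 2λ δxᵀ P δx + ε|δx|² ≤ 0. -/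
open Matrix

section AuxAlgebra

open Polynomial

variable {ι : Type*} [Fintype ι] [DecidableEq ι] {κ : Type*} [Fintype κ] [DecidableEq κ]

set_option linter.unusedSectionVars false

lemma eval_charpoly'' (M : Matrix ι ι ℝ) (t : ℝ) :
    M.charpoly.eval t = (Matrix.diagonal (fun _ => t) - M).det := by
  rw [Matrix.charpoly, ← Polynomial.coe_evalRingHom, RingHom.map_det]
  congr 1
  ext i j
  by_cases h : i = j
  · subst h; simp [charmatrix_apply_eq, Matrix.diagonal_apply_eq]
  · simp [charmatrix_apply_ne _ _ _ h, Matrix.diagonal_apply_ne _ h]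

lemma herm_det (A : Matrix ι ι ℝ) (hA : A.IsHermitian) (β t : ℝ) :
    (Matrix.diagonal (fun _ => t) - β • A).det = ∏ i, (t - β * hA.eigenvalues i) := by
  have hU : (hA.eigenvectorUnitary : Matrix ι ι ℝ) * star (hA.eigenvectorUnitary : Matrix ι ι ℝ) = 1 :=
    Matrix.mem_unitaryGroup_iff.mp hA.eigenvectorUnitary.2
  have hspec := hA.spectral_theorem
  set U : Matrix ι ι ℝ := (hA.eigenvectorUnitary : Matrix ι ι ℝ) with hUdef
  have key : Matrix.diagonal (fun _ => t) - β • A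
      = U * (Matrix.diagonal (fun i => t - β * hA.eigenvalues i)) * star U := by
    have h1 : Matrix.diagonal (fun _ : ι => t) = U * Matrix.diagonal (fun _ : ι => t) * star U := by
      have : Matrix.diagonal (fun _ : ι => t) = t • (1 : Matrix ι ι ℝ) := by
        simp [Matrix.smul_one_eq_diagonal]
      rw [this, Matrix.mul_smul, mul_one, Matrix.smul_mul, hU]
    have h2 : β • A = U * Matrix.diagonal (fun i => β * hA.eigenvalues i) * star U := by
      conv_lhs => rw [hspec, Unitary.conjStarAlgAut_apply]
      rw [← smul_mul_assoc, ← mul_smul_comm, ← Matrix.diagonal_smul]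
      have hfun : (β • (RCLike.ofReal ∘ hA.eigenvalues) : ι → ℝ)
          = fun i => β * hA.eigenvalues i := by
        funext i; simp [smul_eq_mul]
      rw [hfun]
    rw [h1, h2, ← Matrix.sub_mul, ← Matrix.mul_sub, Matrix.diagonal_sub]
  have hU' : star U * U = 1 := Matrix.mem_unitaryGroup_iff'.mp hA.eigenvectorUnitary.2
  rw [key, Matrix.det_mul, Matrix.det_mul, mul_comm, ← mul_assoc, ← Matrix.det_mul, hU',
    Matrix.det_one, one_mul, Matrix.det_diagonal]

lemma herm_charpoly_smul (A : Matrix ι ι ℝ) (hA : A.IsHermitian) (β : ℝ) :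
    (β • A).charpoly = ∏ i, (X - C (β * hA.eigenvalues i)) := by
  apply Polynomial.funext
  intro t
  rw [eval_charpoly'', herm_det A hA β t]
  simp [eval_prod]

lemma herm_charpoly (A : Matrix ι ι ℝ) (hA : A.IsHermitian) :
    A.charpoly = ∏ i, (X - C (hA.eigenvalues i)) := by
  have := herm_charpoly_smul A hA 1
  simpa using this

lemma roots_prod_linear (f : ι → ℝ) :
    (∏ i, (X - C (f i))).roots = Finset.univ.val.map f := by
  rw [Finset.prod_eq_multiset_prod]
  have h : Multiset.map (fun i => X - C (f i)) Finset.univ.val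
      = Multiset.map (fun a => X - C a) (Finset.univ.val.map f) := by
    rw [Multiset.map_map]; rfl
  rw [h, Polynomial.roots_multiset_prod_X_sub_C]

lemma charpoly_blocks (A : Matrix ι ι ℝ) (D : Matrix κ κ ℝ) :
    (Matrix.fromBlocks A 0 0 D).charpoly = A.charpoly * D.charpoly := by
  apply Polynomial.funext
  intro t
  have h1 : (Matrix.diagonal (fun _ : ι ⊕ κ => t)) =
      Matrix.fromBlocks (Matrix.diagonal fun _ => t) 0 0 (Matrix.diagonal fun _ => t) := by
    rw [Matrix.fromBlocks_diagonal]
    congr 1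
    funext i; cases i <;> rfl
  have h2 : Matrix.fromBlocks (Matrix.diagonal fun _ : ι => t) 0 0 (Matrix.diagonal fun _ : κ => t)
      - Matrix.fromBlocks A 0 0 D
      = Matrix.fromBlocks ((Matrix.diagonal fun _ => t) - A) 0 0 ((Matrix.diagonal fun _ => t) - D) := by
    ext (i | i) (j | j) <;> simp [Matrix.fromBlocks]
  rw [eval_mul, eval_charpoly'', eval_charpoly'', eval_charpoly'', h1, h2,
    Matrix.det_fromBlocks_zero₂₁]

lemma card_filter_eq_countP (f : ι → ℝ) (p : ℝ → Prop) [DecidablePred p] :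
    (Finset.univ.filter fun i => p (f i)).card = (Finset.univ.val.map f).countP p := by
  rw [Multiset.countP_map]
  rfl

lemma eig_multiset_blocks (P₁ : Matrix ι ι ℝ) (P₂ : Matrix κ κ ℝ)
    (hP₁ : P₁.IsHermitian) (hP₂ : P₂.IsHermitian) (β : ℝ)
    (hP : (Matrix.fromBlocks P₁ 0 0 (β • P₂)).IsHermitian) :
    Finset.univ.val.map hP.eigenvalues
      = Finset.univ.val.map hP₁.eigenvalues
        + (Finset.univ.val.map hP₂.eigenvalues).map (fun x => β * x) := by
  have h1 : (Matrix.fromBlocks P₁ 0 0 (β • P₂)).charpoly.roots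
      = Finset.univ.val.map hP.eigenvalues := by
    rw [herm_charpoly _ hP, roots_prod_linear]
  have h2 : (Matrix.fromBlocks P₁ 0 0 (β • P₂)).charpoly.roots
      = Finset.univ.val.map hP₁.eigenvalues
        + (Finset.univ.val.map hP₂.eigenvalues).map (fun x => β * x) := by
    rw [charpoly_blocks, herm_charpoly _ hP₁, herm_charpoly_smul _ hP₂]
    have e1 : (∏ i, (X - C (hP₁.eigenvalues i)))
        = (Multiset.map (fun a => X - C a) (Finset.univ.val.map hP₁.eigenvalues)).prod := by
      rw [Finset.prod_eq_multiset_prod, Multiset.map_map]; rfl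
    have e2 : (∏ i, (X - C (β * hP₂.eigenvalues i)))
        = (Multiset.map (fun a => X - C a)
            ((Finset.univ.val.map hP₂.eigenvalues).map (fun x => β * x))).prod := by
      rw [Finset.prod_eq_multiset_prod, Multiset.map_map, Multiset.map_map]; rfl
    rw [e1, e2, ← Multiset.prod_add, ← Multiset.map_add, Polynomial.roots_multiset_prod_X_sub_C]
  rw [← h1, h2]

lemma dot_split (u v : ι ⊕ κ → ℝ) :
    u ⬝ᵥ v = (u ∘ Sum.inl) ⬝ᵥ (v ∘ Sum.inl) + (u ∘ Sum.inr) ⬝ᵥ (v ∘ Sum.inr) := by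
  simp [dotProduct, Fintype.sum_sum_type]

lemma dot_self_nonneg (v : ι → ℝ) : 0 ≤ v ⬝ᵥ v :=
  Finset.sum_nonneg fun i _ => mul_self_nonneg _

end AuxAlgebra

/-- The closed-loop vector field of the negative feedback interconnection
`u₁ = -y₂`, `u₂ = y₁` of `ẋᵢ = fᵢ(xᵢ) + Bᵢuᵢ`, `yᵢ = Cᵢxᵢ`. -/
noncomputable def closedLoop {n₁ n₂ m : ℕ}
    (f₁ : (Fin n₁ → ℝ) → (Fin n₁ → ℝ)) (f₂ : (Fin n₂ → ℝ) → (Fin n₂ → ℝ))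
    (B₁ : Matrix (Fin n₁) (Fin m) ℝ) (B₂ : Matrix (Fin n₂) (Fin m) ℝ)
    (C₁ : Matrix (Fin m) (Fin n₁) ℝ) (C₂ : Matrix (Fin m) (Fin n₂) ℝ)
    (x : Fin n₁ ⊕ Fin n₂ → ℝ) : Fin n₁ ⊕ Fin n₂ → ℝ :=
  Sum.elim (f₁ (x ∘ Sum.inl) - B₁.mulVec (C₂.mulVec (x ∘ Sum.inr)))
    (f₂ (x ∘ Sum.inr) + B₂.mulVec (C₁.mulVec (x ∘ Sum.inl)))

section D
variable {n₁ n₂ m : ℕ}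
    (f₁ : (Fin n₁ → ℝ) → (Fin n₁ → ℝ)) (f₂ : (Fin n₂ → ℝ) → (Fin n₂ → ℝ))
    (B₁ : Matrix (Fin n₁) (Fin m) ℝ) (B₂ : Matrix (Fin n₂) (Fin m) ℝ)
    (C₁ : Matrix (Fin m) (Fin n₁) ℝ) (C₂ : Matrix (Fin m) (Fin n₂) ℝ)

noncomputable def Lleft : ((Fin n₁ ⊕ Fin n₂) → ℝ) →L[ℝ] (Fin n₁ → ℝ) :=
  ContinuousLinearMap.pi fun i => ContinuousLinearMap.proj (Sum.inl i)

noncomputable def Lright : ((Fin n₁ ⊕ Fin n₂) → ℝ) →L[ℝ] (Fin n₂ → ℝ) :=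
  ContinuousLinearMap.pi fun i => ContinuousLinearMap.proj (Sum.inr i)

noncomputable def mulVecCLM {a b : ℕ} (M : Matrix (Fin a) (Fin b) ℝ) :
    (Fin b → ℝ) →L[ℝ] (Fin a → ℝ) :=
  LinearMap.toContinuousLinearMap M.mulVecLin

lemma fderiv_closedLoop (hf₁ : ContDiff ℝ 1 f₁) (hf₂ : ContDiff ℝ 1 f₂)
    (x δx : Fin n₁ ⊕ Fin n₂ → ℝ) :
    fderiv ℝ (closedLoop f₁ f₂ B₁ B₂ C₁ C₂) x δx =
      Sum.elim (fderiv ℝ f₁ (x ∘ Sum.inl) (δx ∘ Sum.inl) - B₁ *ᵥ (C₂ *ᵥ (δx ∘ Sum.inr)))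
        (fderiv ℝ f₂ (x ∘ Sum.inr) (δx ∘ Sum.inr) + B₂ *ᵥ (C₁ *ᵥ (δx ∘ Sum.inl))) := by
  set L₁ := (Lleft : ((Fin n₁ ⊕ Fin n₂) → ℝ) →L[ℝ] (Fin n₁ → ℝ)) with hL₁
  set L₂ := (Lright : ((Fin n₁ ⊕ Fin n₂) → ℝ) →L[ℝ] (Fin n₂ → ℝ)) with hL₂
  set M₁ := mulVecCLM (B₁ * C₂) with hM₁
  set M₂ := mulVecCLM (B₂ * C₁) with hM₂
  have hcl : closedLoop f₁ f₂ B₁ B₂ C₁ C₂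
      = fun y => Sum.elim (f₁ (L₁ y) - M₁ (L₂ y)) (f₂ (L₂ y) + M₂ (L₁ y)) := by
    funext y
    show Sum.elim (f₁ (y ∘ Sum.inl) - B₁ *ᵥ (C₂ *ᵥ (y ∘ Sum.inr)))
      (f₂ (y ∘ Sum.inr) + B₂ *ᵥ (C₁ *ᵥ (y ∘ Sum.inl))) = _
    have e1 : B₁ *ᵥ (C₂ *ᵥ (y ∘ Sum.inr)) = M₁ (L₂ y) := by
      show _ = (B₁ * C₂) *ᵥ (y ∘ Sum.inr)
      rw [Matrix.mulVec_mulVec]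
    have e2 : B₂ *ᵥ (C₁ *ᵥ (y ∘ Sum.inl)) = M₂ (L₁ y) := by
      show _ = (B₂ * C₁) *ᵥ (y ∘ Sum.inl)
      rw [Matrix.mulVec_mulVec]
    rw [e1, e2]
    rfl
  set G := ((fderiv ℝ f₁ (L₁ x)).comp L₁) - (M₁.comp L₂) with hG
  set H := ((fderiv ℝ f₂ (L₂ x)).comp L₂) + (M₂.comp L₁) with hH
  set K : ((Fin n₁ ⊕ Fin n₂) → ℝ) →L[ℝ] ((Fin n₁ ⊕ Fin n₂) → ℝ) :=
    ContinuousLinearMap.pi (fun j => Sum.rec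
      (fun i => (ContinuousLinearMap.proj i).comp G)
      (fun i => (ContinuousLinearMap.proj i).comp H) j) with hK
  have hGd : HasFDerivAt (fun y => f₁ (L₁ y) - M₁ (L₂ y)) G x := by
    have ha : HasFDerivAt (fun y => f₁ (L₁ y)) ((fderiv ℝ f₁ (L₁ x)).comp L₁) x :=
      ((hf₁.differentiable one_ne_zero) (L₁ x)).hasFDerivAt.comp x L₁.hasFDerivAt
    exact ha.sub (M₁.comp L₂).hasFDerivAt
  have hHd : HasFDerivAt (fun y => f₂ (L₂ y) + M₂ (L₁ y)) H x := by
    have ha : HasFDerivAt (fun y => f₂ (L₂ y)) ((fderiv ℝ f₂ (L₂ x)).comp L₂) x :=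
      ((hf₂.differentiable one_ne_zero) (L₂ x)).hasFDerivAt.comp x L₂.hasFDerivAt
    exact ha.add (M₂.comp L₁).hasFDerivAt
  have hKd : HasFDerivAt (closedLoop f₁ f₂ B₁ B₂ C₁ C₂) K x := by
    rw [hcl]
    apply hasFDerivAt_pi''
    intro j
    cases j with
    | inl i =>
      exact (ContinuousLinearMap.proj i).hasFDerivAt.comp x hGd
    | inr i =>
      exact (ContinuousLinearMap.proj i).hasFDerivAt.comp x hHd
  rw [hKd.fderiv]
  funext j
  cases j with
  | inl i =>
    show (fderiv ℝ f₁ (x ∘ Sum.inl) (δx ∘ Sum.inl) - (B₁ * C₂) *ᵥ (δx ∘ Sum.inr)) i = _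
    rw [← Matrix.mulVec_mulVec]
    rfl
  | inr i =>
    show (fderiv ℝ f₂ (x ∘ Sum.inr) (δx ∘ Sum.inr) + (B₂ * C₁) *ᵥ (δx ∘ Sum.inl)) i = _
    rw [← Matrix.mulVec_mulVec]
    rfl
end D

/-- Small-gain theorem for `p`-dominance (Theorem 6 of the paper): if system `i` has
differential `L_{2,pᵢ}`-gain less than `γᵢ` with rate `λ` and `γ₁γ₂ < 1`, then the
negative feedback interconnection is strictly `(p₁+p₂)`-dominant with rate `λ`. -/
theorem small_gain_dominance {n₁ n₂ m : ℕ} (p₁ p₂ : ℕ)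
    (f₁ : (Fin n₁ → ℝ) → (Fin n₁ → ℝ)) (f₂ : (Fin n₂ → ℝ) → (Fin n₂ → ℝ))
    (B₁ : Matrix (Fin n₁) (Fin m) ℝ) (B₂ : Matrix (Fin n₂) (Fin m) ℝ)
    (C₁ : Matrix (Fin m) (Fin n₁) ℝ) (C₂ : Matrix (Fin m) (Fin n₂) ℝ)
    (lam γ₁ γ₂ ε₁ ε₂ : ℝ) (hlam : 0 ≤ lam) (hγ₁ : 0 < γ₁) (hγ₂ : 0 < γ₂)
    (hε₁ : 0 < ε₁) (hε₂ : 0 < ε₂)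
    (hf₁ : ContDiff ℝ 1 f₁) (hf₂ : ContDiff ℝ 1 f₂)
    (P₁ : Matrix (Fin n₁) (Fin n₁) ℝ) (P₂ : Matrix (Fin n₂) (Fin n₂) ℝ)
    (hP₁ : P₁.IsHermitian) (hP₂ : P₂.IsHermitian)
    (hP₁neg : (Finset.univ.filter fun i => hP₁.eigenvalues i < 0).card = p₁)
    (hP₁pos : (Finset.univ.filter fun i => 0 < hP₁.eigenvalues i).card = n₁ - p₁)
    (hP₁zero : ∀ i, hP₁.eigenvalues i ≠ 0)
    (hP₂neg : (Finset.univ.filter fun i => hP₂.eigenvalues i < 0).card = p₂)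
    (hP₂pos : (Finset.univ.filter fun i => 0 < hP₂.eigenvalues i).card = n₂ - p₂)
    (hP₂zero : ∀ i, hP₂.eigenvalues i ≠ 0)
    (hdiss₁ : ∀ (x δx : Fin n₁ → ℝ) (δu : Fin m → ℝ),
      2 * ((fderiv ℝ f₁ x δx + B₁.mulVec δu) ⬝ᵥ P₁.mulVec δx) +
          2 * lam * (δx ⬝ᵥ P₁.mulVec δx) + ε₁ * (δx ⬝ᵥ δx) ≤
        -(C₁.mulVec δx ⬝ᵥ C₁.mulVec δx) + γ₁ ^ 2 * (δu ⬝ᵥ δu))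
    (hdiss₂ : ∀ (x δx : Fin n₂ → ℝ) (δu : Fin m → ℝ),
      2 * ((fderiv ℝ f₂ x δx + B₂.mulVec δu) ⬝ᵥ P₂.mulVec δx) +
          2 * lam * (δx ⬝ᵥ P₂.mulVec δx) + ε₂ * (δx ⬝ᵥ δx) ≤
        -(C₂.mulVec δx ⬝ᵥ C₂.mulVec δx) + γ₂ ^ 2 * (δu ⬝ᵥ δu))
    (hsg : γ₁ * γ₂ < 1) :
    ∃ ε : ℝ, 0 < ε ∧
      ∃ P : Matrix (Fin n₁ ⊕ Fin n₂) (Fin n₁ ⊕ Fin n₂) ℝ, ∃ hP : P.IsHermitian,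
        (Finset.univ.filter fun i => hP.eigenvalues i < 0).card = p₁ + p₂ ∧
        (Finset.univ.filter fun i => 0 < hP.eigenvalues i).card = n₁ + n₂ - (p₁ + p₂) ∧
        (∀ i, hP.eigenvalues i ≠ 0) ∧
        ∀ x δx : Fin n₁ ⊕ Fin n₂ → ℝ,
          2 * ((fderiv ℝ (closedLoop f₁ f₂ B₁ B₂ C₁ C₂) x δx) ⬝ᵥ P.mulVec δx) +
              2 * lam * (δx ⬝ᵥ P.mulVec δx) + ε * (δx ⬝ᵥ δx) ≤ 0 := by
  set β : ℝ := γ₁ / γ₂ with hβdef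
  have hβ : 0 < β := div_pos hγ₁ hγ₂
  have hβγ : β * γ₂ ^ 2 = γ₁ * γ₂ := by field_simp [hβdef]; rw [hβdef]; field_simp
  have hγβ : γ₁ ^ 2 ≤ β := by
    rw [hβdef, le_div_iff₀ hγ₂]
    nlinarith
  refine ⟨min ε₁ (β * ε₂), lt_min hε₁ (mul_pos hβ hε₂), ?_⟩
  set ε : ℝ := min ε₁ (β * ε₂) with hεdef
  have hεa : ε ≤ ε₁ := min_le_left _ _
  have hεb : ε ≤ β * ε₂ := min_le_right _ _
  set P : Matrix (Fin n₁ ⊕ Fin n₂) (Fin n₁ ⊕ Fin n₂) ℝ :=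
    Matrix.fromBlocks P₁ 0 0 (β • P₂) with hPdef
  have hQ : (β • P₂).IsHermitian := by
    show (β • P₂)ᴴ = β • P₂
    rw [Matrix.conjTranspose_smul, hP₂.eq, star_trivial]
  have hP : P.IsHermitian := by
    show Pᴴ = P
    rw [hPdef, Matrix.fromBlocks_conjTranspose, hP₁.eq, hQ.eq,
      Matrix.conjTranspose_zero, Matrix.conjTranspose_zero]
  refine ⟨P, hP, ?_, ?_, ?_, ?_⟩
  · -- negative count
    rw [card_filter_eq_countP hP.eigenvalues (fun y => y < 0),
      eig_multiset_blocks P₁ P₂ hP₁ hP₂ β hP, Multiset.countP_add,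
      ← card_filter_eq_countP hP₁.eigenvalues (fun y => y < 0), hP₁neg,
      Multiset.countP_map]
    have : Multiset.filter (fun a => β * a < 0) (Finset.univ.val.map hP₂.eigenvalues)
        = Multiset.filter (fun a => a < 0) (Finset.univ.val.map hP₂.eigenvalues) := by
      apply Multiset.filter_congr
      intro a _
      constructor
      · intro h; nlinarith
      · intro h; exact mul_neg_of_pos_of_neg hβ h
    rw [this, ← Multiset.countP_eq_card_filter,
      ← card_filter_eq_countP hP₂.eigenvalues (fun y => y < 0), hP₂neg]
  · -- positive count
    have hp₁n : p₁ ≤ n₁ := by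
      rw [← hP₁neg]
      calc (Finset.univ.filter fun i => hP₁.eigenvalues i < 0).card
          ≤ Finset.univ.card := Finset.card_filter_le _ _
        _ = n₁ := by simp
    have hp₂n : p₂ ≤ n₂ := by
      rw [← hP₂neg]
      calc (Finset.univ.filter fun i => hP₂.eigenvalues i < 0).card
          ≤ Finset.univ.card := Finset.card_filter_le _ _
        _ = n₂ := by simp
    rw [card_filter_eq_countP hP.eigenvalues (fun y => 0 < y),
      eig_multiset_blocks P₁ P₂ hP₁ hP₂ β hP, Multiset.countP_add,
      ← card_filter_eq_countP hP₁.eigenvalues (fun y => 0 < y), hP₁pos,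
      Multiset.countP_map]
    have : Multiset.filter (fun a => 0 < β * a) (Finset.univ.val.map hP₂.eigenvalues)
        = Multiset.filter (fun a => 0 < a) (Finset.univ.val.map hP₂.eigenvalues) := by
      apply Multiset.filter_congr
      intro a _
      constructor
      · intro h; nlinarith
      · intro h; exact mul_pos hβ h
    rw [this, ← Multiset.countP_eq_card_filter,
      ← card_filter_eq_countP hP₂.eigenvalues (fun y => 0 < y), hP₂pos]
    omega
  · -- no zero eigenvalues
    intro i hi0
    have hmem : (0 : ℝ) ∈ Finset.univ.val.map hP.eigenvalues := by
      rw [← hi0]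
      exact Multiset.mem_map_of_mem _ (Finset.mem_univ i)
    rw [eig_multiset_blocks P₁ P₂ hP₁ hP₂ β hP, Multiset.mem_add] at hmem
    rcases hmem with h | h
    · obtain ⟨j, _, hj⟩ := Multiset.mem_map.1 h
      exact hP₁zero j hj
    · obtain ⟨y, hy, hy0⟩ := Multiset.mem_map.1 h
      obtain ⟨j, _, hj⟩ := Multiset.mem_map.1 hy
      rcases mul_eq_zero.1 hy0 with h' | h'
      · exact (ne_of_gt hβ) h'
      · exact hP₂zero j (hj ▸ h')
  · -- dissipation inequality
    intro x δx
    rw [fderiv_closedLoop f₁ f₂ B₁ B₂ C₁ C₂ hf₁ hf₂ x δx]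
    have hmulvec : P.mulVec δx =
        Sum.elim (P₁ *ᵥ (δx ∘ Sum.inl)) (β • (P₂ *ᵥ (δx ∘ Sum.inr))) := by
      rw [hPdef, Matrix.fromBlocks_mulVec]
      simp [Matrix.smul_mulVec]
    rw [hmulvec]
    rw [dot_split (Sum.elim (fderiv ℝ f₁ (x ∘ Sum.inl) (δx ∘ Sum.inl) - B₁ *ᵥ C₂ *ᵥ (δx ∘ Sum.inr))
        (fderiv ℝ f₂ (x ∘ Sum.inr) (δx ∘ Sum.inr) + B₂ *ᵥ C₁ *ᵥ (δx ∘ Sum.inl))),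
      dot_split δx (Sum.elim (P₁ *ᵥ (δx ∘ Sum.inl)) (β • (P₂ *ᵥ (δx ∘ Sum.inr)))),
      dot_split δx δx]
    simp only [Sum.elim_comp_inl, Sum.elim_comp_inr, dotProduct_smul, smul_eq_mul]
    have h1 := hdiss₁ (x ∘ Sum.inl) (δx ∘ Sum.inl) (-(C₂ *ᵥ (δx ∘ Sum.inr)))
    rw [Matrix.mulVec_neg, ← sub_eq_add_neg, neg_dotProduct, dotProduct_neg,
      neg_neg] at h1
    have h2 := hdiss₂ (x ∘ Sum.inr) (δx ∘ Sum.inr) (C₁ *ᵥ (δx ∘ Sum.inl))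
    have h2' := mul_le_mul_of_nonneg_left h2 hβ.le
    have hs1 : 0 ≤ (C₁ *ᵥ (δx ∘ Sum.inl)) ⬝ᵥ (C₁ *ᵥ (δx ∘ Sum.inl)) := dot_self_nonneg _
    have hs2 : 0 ≤ (C₂ *ᵥ (δx ∘ Sum.inr)) ⬝ᵥ (C₂ *ᵥ (δx ∘ Sum.inr)) := dot_self_nonneg _
    have hna : 0 ≤ (δx ∘ Sum.inl) ⬝ᵥ (δx ∘ Sum.inl) := dot_self_nonneg _
    have hnb : 0 ≤ (δx ∘ Sum.inr) ⬝ᵥ (δx ∘ Sum.inr) := dot_self_nonneg _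
    have hx1 : 0 ≤ (1 - β * γ₂ ^ 2) * ((C₁ *ᵥ (δx ∘ Sum.inl)) ⬝ᵥ (C₁ *ᵥ (δx ∘ Sum.inl))) :=
      mul_nonneg (by rw [hβγ]; linarith) hs1
    have hx2 : 0 ≤ (β - γ₁ ^ 2) * ((C₂ *ᵥ (δx ∘ Sum.inr)) ⬝ᵥ (C₂ *ᵥ (δx ∘ Sum.inr))) :=
      mul_nonneg (by linarith) hs2
    have hx3 : 0 ≤ (ε₁ - ε) * ((δx ∘ Sum.inl) ⬝ᵥ (δx ∘ Sum.inl)) :=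
      mul_nonneg (by linarith) hna
    have hx4 : 0 ≤ (β * ε₂ - ε) * ((δx ∘ Sum.inr) ⬝ᵥ (δx ∘ Sum.inr)) :=
      mul_nonneg (by linarith) hnb
    nlinarith [h1, h2', hx1, hx2, hx3, hx4]
end

section
/- Let f : ℝⁿ → ℝⁿ be continuously differentiable with Jacobian ∂f, let λ ≥ 0, ε > 0, and let P ∈ ℝ^{n×n} be symmetric positive definite such that for all x ∈ ℝⁿ the matrix ∂f(x)ᵀP + P∂f(x) + 2λP + εI is negative semidefinite. Then there exist constants c > 0 and μ > 0 such that any two solutions x₁, x₂ : [0, ∞) → ℝⁿ of ẋ = f(x) satisfy |x₁(t) - x₂(t)| ≤ c e^{-μt} |x₁(0) - x₂(0)| for all t ≥ 0. Consequently, f has at most one zero, and if x* ∈ ℝⁿ satisfies f(x*) = 0 then every solution of ẋ = f(x) defined on [0, ∞) converges to x* as t → ∞. -/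
open Matrix Filter

section aux
variable {n : ℕ}

lemma quad_upper (n : ℕ) (P : Matrix (Fin n) (Fin n) ℝ) :
    ∃ M : ℝ, 0 < M ∧ ∀ v : Fin n → ℝ, v ⬝ᵥ P.mulVec v ≤ M * ∑ i, v i ^ 2 := by
  refine ⟨(∑ i, ∑ j, |P i j|) + 1, by positivity, fun v => ?_⟩
  have h1 : v ⬝ᵥ P.mulVec v = ∑ i, ∑ j, v i * (P i j * v j) := by
    simp [dotProduct, Matrix.mulVec, Finset.mul_sum]
  rw [h1]
  have h2 : ∀ i j, v i * (P i j * v j) ≤ |P i j| * ∑ k, v k ^ 2 := by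
    intro i j
    have : v i * (P i j * v j) ≤ |P i j| * (|v i| * |v j|) := by
      calc v i * (P i j * v j) ≤ |v i * (P i j * v j)| := le_abs_self _
      _ = |P i j| * (|v i| * |v j|) := by rw [abs_mul, abs_mul]; ring
    refine this.trans ?_
    have hab : |v i| * |v j| ≤ ∑ k, v k ^ 2 := by
      have := abs_nonneg (v i)
      have h3 : |v i| * |v j| ≤ (|v i| ^ 2 + |v j| ^ 2) / 2 := by nlinarith [sq_nonneg (|v i| - |v j|)]
      refine h3.trans ?_
      have hi : v i ^ 2 ≤ ∑ k, v k ^ 2 :=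
        Finset.single_le_sum (fun k _ => sq_nonneg (v k)) (Finset.mem_univ i)
      have hj : v j ^ 2 ≤ ∑ k, v k ^ 2 :=
        Finset.single_le_sum (fun k _ => sq_nonneg (v k)) (Finset.mem_univ j)
      rw [sq_abs, sq_abs]; linarith
    exact mul_le_mul_of_nonneg_left hab (abs_nonneg _)
  calc ∑ i, ∑ j, v i * (P i j * v j) ≤ ∑ i, ∑ j, |P i j| * ∑ k, v k ^ 2 := by
        exact Finset.sum_le_sum fun i _ => Finset.sum_le_sum fun j _ => h2 i j
    _ = (∑ i, ∑ j, |P i j|) * ∑ k, v k ^ 2 := by rw [Finset.sum_mul]; congr 1; ext i; rw [Finset.sum_mul]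
    _ ≤ ((∑ i, ∑ j, |P i j|) + 1) * ∑ k, v k ^ 2 := by
        have h4 : (0:ℝ) ≤ ∑ k, v k ^ 2 := Finset.sum_nonneg fun k _ => sq_nonneg _
        nlinarith


lemma quad_lower (n : ℕ) (P : Matrix (Fin n) (Fin n) ℝ) (hP : P.PosDef) :
    ∃ m : ℝ, 0 < m ∧ ∀ v : Fin n → ℝ, m * ∑ i, v i ^ 2 ≤ v ⬝ᵥ P.mulVec v := by
  by_cases hn : n = 0
  · subst hn; exact ⟨1, one_pos, fun v => by simp⟩
  have : Nonempty (Fin n) := ⟨⟨0, Nat.pos_of_ne_zero hn⟩⟩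
  have : Nontrivial (EuclideanSpace ℝ (Fin n)) := by infer_instance
  set q : EuclideanSpace ℝ (Fin n) → ℝ := fun v => (v : Fin n → ℝ) ⬝ᵥ P.mulVec v with hq
  have hqc : Continuous q := by
    have : q = fun v : EuclideanSpace ℝ (Fin n) =>
        ∑ i, (v : Fin n → ℝ) i * ∑ j, P i j * (v : Fin n → ℝ) j := by
      funext v; simp [hq, dotProduct, Matrix.mulVec]
    rw [this]
    refine continuous_finset_sum _ fun i _ => Continuous.mul ?_ (continuous_finset_sum _ fun j _ => Continuous.mul continuous_const ?_)
    · exact (continuous_apply i).comp (EuclideanSpace.equiv (Fin n) ℝ).continuous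
    · exact (continuous_apply j).comp (EuclideanSpace.equiv (Fin n) ℝ).continuous
  have hS : (Metric.sphere (0 : EuclideanSpace ℝ (Fin n)) 1).Nonempty :=
    NormedSpace.sphere_nonempty.2 zero_le_one
  obtain ⟨v₀, hv₀, hmin⟩ :=
    (isCompact_sphere (0 : EuclideanSpace ℝ (Fin n)) 1).exists_isMinOn hS hqc.continuousOn
  have hv₀ne : (v₀ : EuclideanSpace ℝ (Fin n)) ≠ 0 := by
    intro h; rw [mem_sphere_iff_norm, h] at hv₀; simp at hv₀
  have hm : 0 < q v₀ := by
    have := hP.dotProduct_mulVec_pos (x := (v₀ : Fin n → ℝ)) (fun h => hv₀ne (congrArg (WithLp.toLp 2) h))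
    simpa [hq, dotProduct] using this
  refine ⟨q v₀, hm, fun v => ?_⟩
  by_cases hv : v = 0
  · simp [hv, Matrix.mulVec_zero]
  set V : EuclideanSpace ℝ (Fin n) := WithLp.toLp 2 v with hV
  have hvne : V ≠ 0 := fun h => hv (congrArg WithLp.ofLp h)
  have hnv : ‖V‖ ≠ 0 := norm_ne_zero_iff.2 hvne
  set u : EuclideanSpace ℝ (Fin n) := ‖V‖⁻¹ • V with hu
  have hus : u ∈ Metric.sphere (0 : EuclideanSpace ℝ (Fin n)) 1 := by
    rw [mem_sphere_iff_norm, sub_zero, hu, norm_smul, norm_inv, norm_norm,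
      inv_mul_cancel₀ hnv]
  have hqu : q v₀ ≤ q u := hmin hus
  have hsmul : ∀ (c : ℝ) (w : Fin n → ℝ), (c • w) ⬝ᵥ P.mulVec (c • w) = c ^ 2 * (w ⬝ᵥ P.mulVec w) := by
    intro c w
    rw [Matrix.mulVec_smul, dotProduct_smul, smul_dotProduct]
    simp [smul_eq_mul]; ring
  have hscale : q u = ‖V‖⁻¹ ^ 2 * q V := by
    simp only [hq, hu]
    exact hsmul _ _
  have hnorm2 : ‖V‖ ^ 2 = ∑ i, v i ^ 2 := by
    rw [EuclideanSpace.norm_eq, Real.sq_sqrt (Finset.sum_nonneg fun i _ => sq_nonneg _)]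
    congr 1; ext i; rw [Real.norm_eq_abs, sq_abs]
  have hn2pos : 0 < ‖V‖ ^ 2 := by positivity
  have h5 := mul_le_mul_of_nonneg_left (hqu.trans_eq hscale) (le_of_lt hn2pos)
  rw [← hnorm2]
  calc q v₀ * ‖V‖ ^ 2 = ‖V‖ ^ 2 * q v₀ := by ring
    _ ≤ ‖V‖ ^ 2 * (‖V‖⁻¹ ^ 2 * q V) := h5
    _ = q V := by field_simp


lemma hasDerivAt_quad (P : Matrix (Fin n) (Fin n) ℝ) (Δ : ℝ → Fin n → ℝ)
    (d : Fin n → ℝ) (t : ℝ) (hΔ : HasDerivAt Δ d t) :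
    HasDerivAt (fun s => Δ s ⬝ᵥ P.mulVec (Δ s))
      (d ⬝ᵥ P.mulVec (Δ t) + Δ t ⬝ᵥ P.mulVec d) t := by
  have hcomp : ∀ i : Fin n, HasDerivAt (fun s => Δ s i) (d i) t := by
    intro i
    exact ((ContinuousLinearMap.proj i : (Fin n → ℝ) →L[ℝ] ℝ).hasFDerivAt.comp_hasDerivAt t hΔ)
  have heq : (fun s => Δ s ⬝ᵥ P.mulVec (Δ s)) =
      fun s => ∑ i, Δ s i * ∑ j, P i j * Δ s j := by
    funext s; simp [dotProduct, Matrix.mulVec]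
  rw [heq]
  have h : HasDerivAt (fun s => ∑ i, Δ s i * ∑ j, P i j * Δ s j)
      (∑ i, (d i * ∑ j, P i j * Δ t j + Δ t i * ∑ j, P i j * d j)) t := by
    apply HasDerivAt.fun_sum
    intro i _
    exact (hcomp i).mul (HasDerivAt.fun_sum fun j _ => (hcomp j).const_mul (P i j))
  convert h using 1
  simp [dotProduct, Matrix.mulVec, Finset.sum_add_distrib]

lemma key_bound (f : (Fin n → ℝ) → (Fin n → ℝ)) (hf : ContDiff ℝ 1 f)
    (lam ε : ℝ) (hlam : 0 ≤ lam) (hε : 0 < ε)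
    (P : Matrix (Fin n) (Fin n) ℝ) (hP : P.PosDef)
    (hLMI : ∀ x : Fin n → ℝ,
      (-((LinearMap.toMatrix' (↑(fderiv ℝ f x) : (Fin n → ℝ) →ₗ[ℝ] (Fin n → ℝ)))ᵀ * P +
          P * LinearMap.toMatrix' (↑(fderiv ℝ f x) : (Fin n → ℝ) →ₗ[ℝ] (Fin n → ℝ)) +
          (2 * lam) • P + ε • (1 : Matrix (Fin n) (Fin n) ℝ))).PosSemidef)
    (a b : Fin n → ℝ) :
    (f a - f b) ⬝ᵥ P.mulVec (a - b) + (a - b) ⬝ᵥ P.mulVec (f a - f b) ≤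
      -ε * ∑ i, (a i - b i) ^ 2 := by
  set Δ : Fin n → ℝ := a - b with hΔ
  set c : Fin n → ℝ := Matrix.vecMul Δ P + P.mulVec Δ with hc
  -- rewrite LHS as c ⬝ᵥ (f a - f b)
  have hLHS : (f a - f b) ⬝ᵥ P.mulVec Δ + Δ ⬝ᵥ P.mulVec (f a - f b) =
      c ⬝ᵥ (f a - f b) := by
    have e1 : (f a - f b) ⬝ᵥ P.mulVec Δ = (P.mulVec Δ) ⬝ᵥ (f a - f b) := dotProduct_comm _ _
    have e2 : Δ ⬝ᵥ P.mulVec (f a - f b) = (Matrix.vecMul Δ P) ⬝ᵥ (f a - f b) :=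
      Matrix.dotProduct_mulVec _ _ _
    rw [e1, e2, hc, add_dotProduct]; ring
  rw [hLHS]
  -- the path γ and the auxiliary scalar function h
  set γ : ℝ → Fin n → ℝ := fun s => b + s • Δ with hγ
  set h : ℝ → ℝ := fun s => c ⬝ᵥ f (γ s) with hh
  have hγd : ∀ s : ℝ, HasDerivAt γ Δ s := by
    intro s
    have : HasDerivAt (fun s : ℝ => s • Δ) ((1:ℝ) • Δ) s := (hasDerivAt_id s).smul_const Δ
    have := this.const_add b; simp only [one_smul] at this; exact this
  have hfd : ∀ x, HasFDerivAt f (fderiv ℝ f x) x := fun x =>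
    (hf.differentiable one_ne_zero x).hasFDerivAt
  have hhd : ∀ s : ℝ, HasDerivAt h (c ⬝ᵥ (fderiv ℝ f (γ s) Δ)) s := by
    intro s
    have hfγ : HasDerivAt (fun s => f (γ s)) (fderiv ℝ f (γ s) Δ) s :=
      (hfd (γ s)).comp_hasDerivAt s (hγd s)
    have hcomp : ∀ i : Fin n, HasDerivAt (fun s' => f (γ s') i) ((fderiv ℝ f (γ s) Δ) i) s :=
      fun i => (ContinuousLinearMap.proj i : (Fin n → ℝ) →L[ℝ] ℝ).hasFDerivAt.comp_hasDerivAt s hfγ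
    have : HasDerivAt (fun s' => ∑ i, c i * f (γ s') i)
        (∑ i, c i * (fderiv ℝ f (γ s) Δ) i) s :=
      HasDerivAt.fun_sum fun i _ => (hcomp i).const_mul (c i)
    convert this using 1 <;> simp [hh, dotProduct]
  -- bound on h'
  have hbound : ∀ s : ℝ, c ⬝ᵥ (fderiv ℝ f (γ s) Δ) ≤ -ε * ∑ i, Δ i ^ 2 := by
    intro s
    set L : (Fin n → ℝ) →ₗ[ℝ] (Fin n → ℝ) := (↑(fderiv ℝ f (γ s)) : (Fin n → ℝ) →ₗ[ℝ] (Fin n → ℝ))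
    set J : Matrix (Fin n) (Fin n) ℝ := LinearMap.toMatrix' L with hJ
    have hJm : J.mulVec Δ = fderiv ℝ f (γ s) Δ := by
      rw [hJ, ← Matrix.toLin'_apply, Matrix.toLin'_toMatrix']
      rfl
    rw [← hJm]
    have hpsd := (hLMI (γ s)).dotProduct_mulVec_nonneg Δ
    have hexp : c ⬝ᵥ J.mulVec Δ =
        Δ ⬝ᵥ (Jᵀ * P).mulVec Δ + Δ ⬝ᵥ (P * J).mulVec Δ := by
      rw [hc, add_dotProduct]
      rw [← Matrix.mulVec_mulVec (M := P) (N := J), Matrix.dotProduct_mulVec (v := Δ) (A := P)]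
      rw [← Matrix.mulVec_mulVec (M := Jᵀ) (N := P), Matrix.dotProduct_mulVec (v := Δ) (A := Jᵀ)]
      rw [Matrix.vecMul_transpose]
      rw [dotProduct_comm (J.mulVec Δ) (P.mulVec Δ)]
      ring
    rw [hexp]
    have hPq : 0 ≤ Δ ⬝ᵥ P.mulVec Δ := by
      have := hP.posSemidef.dotProduct_mulVec_nonneg Δ; rwa [star_trivial] at this
    have hΔΔ : Δ ⬝ᵥ Δ = ∑ i, Δ i ^ 2 := by simp [dotProduct, sq]
    have hpsd' : 0 ≤ -(Δ ⬝ᵥ (Jᵀ * P).mulVec Δ + Δ ⬝ᵥ (P * J).mulVec Δ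
        + (2 * lam) * (Δ ⬝ᵥ P.mulVec Δ) + ε * (Δ ⬝ᵥ Δ)) := by
      have := hpsd
      simp only [Matrix.neg_mulVec, Matrix.add_mulVec, Matrix.smul_mulVec,
        Matrix.one_mulVec, dotProduct_neg, dotProduct_add, dotProduct_smul,
        smul_eq_mul, star_trivial] at this
      linarith
    nlinarith [mul_nonneg (mul_nonneg (by norm_num : (0:ℝ) ≤ 2) hlam) hPq]
  -- mean value theorem
  have hcont : ContinuousOn h (Set.Icc 0 1) := fun s _ => (hhd s).continuousAt.continuousWithinAt
  obtain ⟨σ, hσ, hslope⟩ := exists_hasDerivAt_eq_slope h (fun s => c ⬝ᵥ (fderiv ℝ f (γ s) Δ))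
    (by norm_num : (0:ℝ) < 1) hcont (fun s _ => hhd s)
  have h10 : h 1 - h 0 = c ⬝ᵥ (f a - f b) := by
    have hγ1 : γ 1 = a := by rw [hγ]; simp [hΔ]
    have hγ0 : γ 0 = b := by rw [hγ]; simp
    rw [hh]
    simp only [hγ1, hγ0]
    rw [dotProduct_sub]
  have : c ⬝ᵥ (f a - f b) = c ⬝ᵥ (fderiv ℝ f (γ σ) Δ) := by
    rw [← h10, hslope]; norm_num
  rw [this]
  simpa [hΔ, Pi.sub_apply] using hbound σ


lemma gronwall_decay (k : ℝ) (g D : ℝ → ℝ)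
    (hg : ∀ t : ℝ, 0 ≤ t → HasDerivAt g (D t) t)
    (hD : ∀ t : ℝ, 0 ≤ t → D t ≤ -k * g t) :
    ∀ t : ℝ, 0 ≤ t → g t ≤ g 0 * Real.exp (-k * t) := by
  set F : ℝ → ℝ := fun t => g t * Real.exp (k * t) with hF
  have hFd : ∀ t : ℝ, 0 ≤ t →
      HasDerivAt F (D t * Real.exp (k * t) + g t * (k * Real.exp (k * t))) t := by
    intro t ht
    have he : HasDerivAt (fun t : ℝ => Real.exp (k * t)) (k * Real.exp (k * t)) t := by
      have := (((hasDerivAt_id t).const_mul k).exp)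
      simpa [mul_comm] using this
    exact (hg t ht).mul he
  have hanti : AntitoneOn F (Set.Ici (0:ℝ)) := by
    apply antitoneOn_of_deriv_nonpos (convex_Ici 0)
    · exact fun t ht => (hFd t ht).continuousAt.continuousWithinAt
    · intro t ht
      rw [interior_Ici] at ht
      exact ((hFd t (le_of_lt ht)).differentiableAt).differentiableWithinAt
    · intro t ht
      rw [interior_Ici] at ht
      rw [(hFd t (le_of_lt ht)).deriv]
      have h1 := hD t (le_of_lt ht)
      have h2 : (0:ℝ) < Real.exp (k * t) := Real.exp_pos _
      nlinarith
  intro t ht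
  have hFt : F t ≤ F 0 := hanti (Set.self_mem_Ici) ht ht
  have h0 : F 0 = g 0 := by simp [hF]
  have hpos : (0:ℝ) < Real.exp (k * t) := Real.exp_pos _
  have : g t * Real.exp (k * t) ≤ g 0 := by rw [← h0]; exact hFt
  have h3 := mul_le_mul_of_nonneg_right this (le_of_lt (Real.exp_pos (-k * t)))
  calc g t = g t * Real.exp (k * t) * Real.exp (-k * t) := by
        rw [mul_assoc, ← Real.exp_add]; simp
    _ ≤ g 0 * Real.exp (-k * t) := h3

end aux

/-- The `p = 0` case of Theorem 9 of the paper: a strictly `0`-dominant system is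
exponentially incrementally contracting, so it has at most one equilibrium and every
solution on `[0,∞)` converges to the equilibrium (when one exists). -/
theorem strict_zero_dominance_convergence (n : ℕ)
    (f : (Fin n → ℝ) → (Fin n → ℝ)) (hf : ContDiff ℝ 1 f)
    (lam ε : ℝ) (hlam : 0 ≤ lam) (hε : 0 < ε)
    (P : Matrix (Fin n) (Fin n) ℝ) (hP : P.PosDef)
    (hLMI : ∀ x : Fin n → ℝ,
      (-((LinearMap.toMatrix' (↑(fderiv ℝ f x) : (Fin n → ℝ) →ₗ[ℝ] (Fin n → ℝ)))ᵀ * P +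
          P * LinearMap.toMatrix' (↑(fderiv ℝ f x) : (Fin n → ℝ) →ₗ[ℝ] (Fin n → ℝ)) +
          (2 * lam) • P + ε • (1 : Matrix (Fin n) (Fin n) ℝ))).PosSemidef) :
    (∃ c : ℝ, 0 < c ∧ ∃ μ : ℝ, 0 < μ ∧
      ∀ x₁ x₂ : ℝ → (Fin n → ℝ),
        (∀ t : ℝ, 0 ≤ t → HasDerivAt x₁ (f (x₁ t)) t) →
        (∀ t : ℝ, 0 ≤ t → HasDerivAt x₂ (f (x₂ t)) t) →
        ∀ t : ℝ, 0 ≤ t →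
          Real.sqrt (∑ i, (x₁ t i - x₂ t i) ^ 2) ≤
            c * Real.exp (-μ * t) * Real.sqrt (∑ i, (x₁ 0 i - x₂ 0 i) ^ 2)) ∧
    (∀ a b : Fin n → ℝ, f a = 0 → f b = 0 → a = b) ∧
    (∀ xstar : Fin n → ℝ, f xstar = 0 →
      ∀ x : ℝ → (Fin n → ℝ), (∀ t : ℝ, 0 ≤ t → HasDerivAt x (f (x t)) t) →
        Tendsto x atTop (nhds xstar)) := by
  obtain ⟨m, hm, hmq⟩ := quad_lower n P hP
  obtain ⟨M, hM, hMq⟩ := quad_upper n P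
  set k : ℝ := ε / M with hk
  have hkpos : 0 < k := div_pos hε hM
  set c : ℝ := Real.sqrt (M / m) with hcdef
  set μ : ℝ := k / 2 with hμ
  have hcpos : 0 < c := Real.sqrt_pos.2 (div_pos hM hm)
  have hμpos : 0 < μ := by positivity
  -- main contraction estimate
  have main : ∀ x₁ x₂ : ℝ → (Fin n → ℝ),
      (∀ t : ℝ, 0 ≤ t → HasDerivAt x₁ (f (x₁ t)) t) →
      (∀ t : ℝ, 0 ≤ t → HasDerivAt x₂ (f (x₂ t)) t) →
      ∀ t : ℝ, 0 ≤ t →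
        Real.sqrt (∑ i, (x₁ t i - x₂ t i) ^ 2) ≤
          c * Real.exp (-μ * t) * Real.sqrt (∑ i, (x₁ 0 i - x₂ 0 i) ^ 2) := by
    intro x₁ x₂ h₁ h₂
    set Δ : ℝ → Fin n → ℝ := fun t => x₁ t - x₂ t with hΔ
    set g : ℝ → ℝ := fun t => Δ t ⬝ᵥ P.mulVec (Δ t) with hg
    set D : ℝ → ℝ := fun t =>
      (f (x₁ t) - f (x₂ t)) ⬝ᵥ P.mulVec (Δ t) + Δ t ⬝ᵥ P.mulVec (f (x₁ t) - f (x₂ t)) with hD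
    have hgd : ∀ t : ℝ, 0 ≤ t → HasDerivAt g (D t) t := by
      intro t ht
      exact hasDerivAt_quad P Δ (f (x₁ t) - f (x₂ t)) t ((h₁ t ht).sub (h₂ t ht))
    have hDb : ∀ t : ℝ, 0 ≤ t → D t ≤ -k * g t := by
      intro t ht
      have h1 := key_bound f hf lam ε hlam hε P hP hLMI (x₁ t) (x₂ t)
      have h2 : g t ≤ M * ∑ i, (x₁ t i - x₂ t i) ^ 2 := by
        exact hMq (Δ t)
      have h3 : D t ≤ -ε * ∑ i, (x₁ t i - x₂ t i) ^ 2 := h1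
      have hMpos := hM
      rw [hk]
      have h4 : (ε / M) * g t ≤ ε * ∑ i, (x₁ t i - x₂ t i) ^ 2 := by
        rw [div_mul_eq_mul_div, div_le_iff₀ hM] at *
        nlinarith
      linarith
    have hgr := gronwall_decay k g D hgd hDb
    intro t ht
    have h5 : m * ∑ i, (x₁ t i - x₂ t i) ^ 2 ≤ g t := by
      exact hmq (Δ t)
    have h6 : g 0 ≤ M * ∑ i, (x₁ 0 i - x₂ 0 i) ^ 2 := by
      exact hMq (Δ 0)
    have h7 : ∑ i, (x₁ t i - x₂ t i) ^ 2 ≤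
        (M / m) * Real.exp (-k * t) * ∑ i, (x₁ 0 i - x₂ 0 i) ^ 2 := by
      have hgt := hgr t ht
      have hexp := Real.exp_pos (-k * t)
      have := mul_le_mul_of_nonneg_right h6 hexp.le
      rw [div_mul_eq_mul_div, div_mul_eq_mul_div, le_div_iff₀ hm]
      nlinarith
    have h8 := Real.sqrt_le_sqrt h7
    refine h8.trans ?_
    have hsum0 : (0:ℝ) ≤ ∑ i, (x₁ 0 i - x₂ 0 i) ^ 2 := Finset.sum_nonneg fun i _ => sq_nonneg _
    rw [Real.sqrt_mul (by positivity), Real.sqrt_mul (by positivity)]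
    have hse : Real.sqrt (Real.exp (-k * t)) = Real.exp (-μ * t) := by
      rw [← Real.exp_half]; congr 1; rw [hμ]; ring
    rw [hse, hcdef]
  refine ⟨⟨c, hcpos, μ, hμpos, main⟩, ?_, ?_⟩
  · -- uniqueness of equilibria
    intro a b ha hb
    have hca : ∀ t : ℝ, 0 ≤ t → HasDerivAt (fun _ : ℝ => a) (f ((fun _ : ℝ => a) t)) t := by
      intro t _; show HasDerivAt (fun _ : ℝ => a) (f a) t
      rw [ha]; exact hasDerivAt_const t a
    have hcb : ∀ t : ℝ, 0 ≤ t → HasDerivAt (fun _ : ℝ => b) (f ((fun _ : ℝ => b) t)) t := by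
      intro t _; show HasDerivAt (fun _ : ℝ => b) (f b) t
      rw [hb]; exact hasDerivAt_const t b
    have hbd := main (fun _ => a) (fun _ => b) hca hcb
    set S : ℝ := Real.sqrt (∑ i, (a i - b i) ^ 2) with hS
    have hbd' : ∀ t : ℝ, 0 ≤ t → S ≤ c * Real.exp (-μ * t) * S := fun t ht => hbd t ht
    have htend : Tendsto (fun t : ℝ => c * Real.exp (-μ * t) * S) atTop (nhds 0) := by
      have h1 : Tendsto (fun t : ℝ => μ * t) atTop atTop :=
        Tendsto.const_mul_atTop hμpos tendsto_id
      have h2 : Tendsto (fun t : ℝ => Real.exp (-(μ * t))) atTop (nhds 0) :=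
        Real.tendsto_exp_neg_atTop_nhds_zero.comp h1
      have h3 : Tendsto (fun t : ℝ => c * Real.exp (-(μ * t)) * S) atTop (nhds (c * 0 * S)) :=
        (h2.const_mul c).mul_const S
      simpa [neg_mul] using h3
    have hS0 : S ≤ 0 :=
      ge_of_tendsto htend (eventually_atTop.2 ⟨0, fun t ht => hbd' t ht⟩)
    have hSnn : 0 ≤ S := Real.sqrt_nonneg _
    have hSz : S = 0 := le_antisymm hS0 hSnn
    have hsum : ∑ i, (a i - b i) ^ 2 = 0 := by
      have hnn : (0:ℝ) ≤ ∑ i, (a i - b i) ^ 2 := Finset.sum_nonneg fun i _ => sq_nonneg _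
      by_contra hne
      have : 0 < ∑ i, (a i - b i) ^ 2 := lt_of_le_of_ne hnn (Ne.symm hne)
      have := Real.sqrt_pos.2 this
      rw [← hS] at this; linarith
    funext i
    have := (Finset.sum_eq_zero_iff_of_nonneg (fun j _ => sq_nonneg (a j - b j))).1 hsum i
      (Finset.mem_univ i)
    have : a i - b i = 0 := by
      have := sq_eq_zero_iff.1 this; exact this
    linarith
  · -- convergence to the equilibrium
    intro xstar hstar x hx
    have hcs : ∀ t : ℝ, 0 ≤ t →
        HasDerivAt (fun _ : ℝ => xstar) (f ((fun _ : ℝ => xstar) t)) t := by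
      intro t _; show HasDerivAt (fun _ : ℝ => xstar) (f xstar) t
      rw [hstar]; exact hasDerivAt_const t xstar
    have hbd := main x (fun _ => xstar) hx hcs
    rw [tendsto_iff_norm_sub_tendsto_zero]
    set C : ℝ := Real.sqrt (∑ i, (x 0 i - xstar i) ^ 2) with hC
    apply squeeze_zero' (Filter.Eventually.of_forall fun t => norm_nonneg _)
      (g := fun t => c * Real.exp (-μ * t) * C)
    · filter_upwards [eventually_ge_atTop (0:ℝ)] with t ht
      have h1 := hbd t ht
      have h2 : ‖x t - xstar‖ ≤ Real.sqrt (∑ i, (x t i - xstar i) ^ 2) := by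
        rw [pi_norm_le_iff_of_nonneg (Real.sqrt_nonneg _)]
        intro i
        rw [Real.norm_eq_abs, ← Real.sqrt_sq_eq_abs]
        apply Real.sqrt_le_sqrt
        exact Finset.single_le_sum (fun j _ => sq_nonneg ((x t - xstar) j)) (Finset.mem_univ i)
      refine h2.trans ?_
      simpa using h1
    · have h1 : Tendsto (fun t : ℝ => μ * t) atTop atTop :=
        Tendsto.const_mul_atTop hμpos tendsto_id
      have h2 : Tendsto (fun t : ℝ => Real.exp (-(μ * t))) atTop (nhds 0) :=
        Real.tendsto_exp_neg_atTop_nhds_zero.comp h1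
      have h3 : Tendsto (fun t : ℝ => c * Real.exp (-(μ * t)) * C) atTop (nhds (c * 0 * C)) :=
        (h2.const_mul c).mul_const C
      simpa [neg_mul] using h3
end
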